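/- arXiv:1611.07853 — 3 statements merged into one kernel-verified Lean document; each statement's English description precedes it below -/
import Mathlib

section
/- Suppose S : U → Y is weak-to-weak continuous, i.e., u_i ⇀ u in U implies S(u_i) ⇀ S(u) in Y. Then the functional E(u) = (1/2)‖S(u) − z‖_Y² + ∫_Ω g(u(x)) dx admits a global minimizer ū ∈ U. -/
set_option maxHeartbeats 1000000
set_option synthInstance.maxHeartbeats 1000000

open MeasureTheory Set Filter Topology

noncomputable section

abbrev Vec (k : ℕ) := EuclideanSpace ℝ (Fin k)

/-- Weak convergence of a sequence in a real inner product space. -/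
def WeakTendsto {X : Type*} [NormedAddCommGroup X] [InnerProductSpace ℝ X]
    (u : ℕ → X) (l : X) : Prop :=
  ∀ w : X, Tendsto (fun i => (inner ℝ (u i) w : ℝ)) atTop (nhds (inner ℝ l w : ℝ))

/-- Convexity for extended-real-valued functions. -/
def EConvexOn {X : Type*} [AddCommGroup X] [Module ℝ X] (g : X → EReal) : Prop :=
  ∀ x y : X, ∀ a b : ℝ, 0 ≤ a → 0 ≤ b → a + b = 1 →
    g (a • x + b • y) ≤ (a : EReal) * g x + (b : EReal) * g y

/-- Properness for extended-real-valued functions. -/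
def EProper {X : Type*} (g : X → EReal) : Prop :=
  (∃ v, g v ≠ ⊤) ∧ ∀ v, g v ≠ ⊥

open Classical in
/-- The integral functional `u ↦ ∫ g(u x) dμ`, valued in `EReal`. -/
def intG {α : Type*} [MeasurableSpace α] (μ : Measure α) {k : ℕ} (g : Vec k → EReal)
    (u : α → Vec k) : EReal :=
  if (∀ᵐ x ∂μ, g (u x) ≠ ⊤) ∧ Integrable (fun x => (g (u x)).toReal) μ
  then (((∫ x, (g (u x)).toReal ∂μ : ℝ) : EReal)) else ⊤

/-- The Tikhonov-type energy `u ↦ ½‖S u − z‖² + ∫ g(u x) dμ`. -/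
def energy {α : Type*} [MeasurableSpace α] (μ : Measure α) {k : ℕ} {Y : Type*}
    [NormedAddCommGroup Y]
    (S : Lp (Vec k) 2 μ → Y) (z : Y) (g : Vec k → EReal) (u : Lp (Vec k) 2 μ) : EReal :=
  (((1/2 : ℝ) * ‖S u - z‖^2 : ℝ) : EReal) + intG μ g (fun x => u x)

/-! ### Auxiliary lemmas -/

open scoped ENNReal

/-- **Weak sequential compactness** of bounded sequences in a separable Hilbert space. -/
theorem weak_seq_compact {X : Type*} [NormedAddCommGroup X] [InnerProductSpace ℝ X]
    [CompleteSpace X] [SecondCountableTopology X]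
    (u : ℕ → X) (C : ℝ) (hu : ∀ i, ‖u i‖ ≤ C) :
    ∃ φ : ℕ → ℕ, StrictMono φ ∧ ∃ l : X, WeakTendsto (u ∘ φ) l := by
  have hC0 : 0 ≤ C := le_trans (norm_nonneg _) (hu 0)
  obtain ⟨D, hD⟩ := TopologicalSpace.exists_dense_seq X
  set K : Set (ℕ → ℝ) := Set.pi Set.univ (fun j => Icc (-(C * ‖D j‖)) (C * ‖D j‖)) with hK
  have hKc : IsCompact K := isCompact_univ_pi fun j => isCompact_Icc
  have hmem : ∀ i, (fun j => (inner ℝ (u i) (D j) : ℝ)) ∈ K := by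
    intro i
    refine Set.mem_univ_pi.2 fun j => ?_
    have hle : |(inner ℝ (u i) (D j) : ℝ)| ≤ C * ‖D j‖ :=
      le_trans (abs_real_inner_le_norm (u i) (D j))
        (mul_le_mul_of_nonneg_right (hu i) (norm_nonneg _))
    exact abs_le.1 hle
  obtain ⟨y, -, φ, hφ, hconv⟩ := hKc.isSeqCompact hmem
  refine ⟨φ, hφ, ?_⟩
  have hptwise : ∀ j, Tendsto (fun i => (inner ℝ (u (φ i)) (D j) : ℝ)) atTop (𝓝 (y j)) :=
    fun j => (tendsto_pi_nhds.1 hconv) j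
  have key : ∀ (w : X) (j : ℕ) (i : ℕ),
      |(inner ℝ (u (φ i)) w : ℝ) - (inner ℝ (u (φ i)) (D j) : ℝ)| ≤ C * ‖w - D j‖ := by
    intro w j i
    have h : (inner ℝ (u (φ i)) w : ℝ) - (inner ℝ (u (φ i)) (D j) : ℝ)
        = inner ℝ (u (φ i)) (w - D j) := by rw [inner_sub_right]
    rw [h]
    exact le_trans (abs_real_inner_le_norm _ _)
      (mul_le_mul_of_nonneg_right (hu _) (norm_nonneg _))
  have hcauchy : ∀ w : X, CauchySeq (fun i => (inner ℝ (u (φ i)) w : ℝ)) := by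
    intro w
    rw [Metric.cauchySeq_iff]
    intro ε hε
    have hδ : 0 < ε / (3 * (C + 1)) := by positivity
    obtain ⟨j, hj⟩ := Metric.denseRange_iff.1 hD w (ε / (3 * (C + 1))) hδ
    obtain ⟨N, hN⟩ := Metric.cauchySeq_iff.1 (hptwise j).cauchySeq (ε/3) (by linarith)
    refine ⟨N, fun a ha b hb => ?_⟩
    have hwj : ‖w - D j‖ ≤ ε / (3 * (C + 1)) := by
      have := hj; rw [dist_comm] at this; simpa [dist_eq_norm'] using this.le
    have hsmall : C * ‖w - D j‖ ≤ ε / 3 := by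
      have h1 : C * ‖w - D j‖ ≤ C * (ε / (3 * (C + 1))) :=
        mul_le_mul_of_nonneg_left hwj hC0
      have h2 : C * (ε / (3 * (C + 1))) ≤ ε / 3 := by
        rw [mul_div_assoc'] ; rw [div_le_div_iff₀ (by positivity) (by norm_num)]
        nlinarith [hε.le, hC0]
      linarith
    have h1 := key w j a; have h2 := key w j b
    have h3 := hN a ha b hb
    rw [Real.dist_eq] at h3 ⊢
    have heq : (inner ℝ (u (φ a)) w : ℝ) - (inner ℝ (u (φ b)) w : ℝ) =
        ((inner ℝ (u (φ a)) w : ℝ) - (inner ℝ (u (φ a)) (D j) : ℝ))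
        + ((inner ℝ (u (φ a)) (D j) : ℝ) - (inner ℝ (u (φ b)) (D j) : ℝ))
        - ((inner ℝ (u (φ b)) w : ℝ) - (inner ℝ (u (φ b)) (D j) : ℝ)) := by ring
    rw [heq]
    calc |_| ≤ |((inner ℝ (u (φ a)) w : ℝ) - (inner ℝ (u (φ a)) (D j) : ℝ))
        + ((inner ℝ (u (φ a)) (D j) : ℝ) - (inner ℝ (u (φ b)) (D j) : ℝ))|
        + |(inner ℝ (u (φ b)) w : ℝ) - (inner ℝ (u (φ b)) (D j) : ℝ)| := abs_sub _ _
      _ ≤ |(inner ℝ (u (φ a)) w : ℝ) - (inner ℝ (u (φ a)) (D j) : ℝ)|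
        + |(inner ℝ (u (φ a)) (D j) : ℝ) - (inner ℝ (u (φ b)) (D j) : ℝ)|
        + |(inner ℝ (u (φ b)) w : ℝ) - (inner ℝ (u (φ b)) (D j) : ℝ)| := by
          gcongr; exact abs_add_le _ _
      _ < ε := by linarith
  have hlim : ∀ w : X, ∃ L : ℝ, Tendsto (fun i => (inner ℝ (u (φ i)) w : ℝ)) atTop (𝓝 L) :=
    fun w => cauchySeq_tendsto_of_complete (hcauchy w)
  choose f hf using hlim
  have hadd : ∀ w₁ w₂, f (w₁ + w₂) = f w₁ + f w₂ := by
    intro w₁ w₂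
    have h1 : Tendsto (fun i => (inner ℝ (u (φ i)) w₁ : ℝ) + (inner ℝ (u (φ i)) w₂ : ℝ))
        atTop (𝓝 (f w₁ + f w₂)) := (hf w₁).add (hf w₂)
    have h2 : (fun i => (inner ℝ (u (φ i)) (w₁ + w₂) : ℝ))
        = fun i => (inner ℝ (u (φ i)) w₁ : ℝ) + (inner ℝ (u (φ i)) w₂ : ℝ) := by
      funext i; rw [inner_add_right]
    exact tendsto_nhds_unique (h2 ▸ hf (w₁ + w₂)) h1
  have hsmul : ∀ (c : ℝ) w, f (c • w) = c * f w := by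
    intro c w
    have h1 : Tendsto (fun i => c * (inner ℝ (u (φ i)) w : ℝ)) atTop (𝓝 (c * f w)) :=
      (hf w).const_mul c
    have h2 : (fun i => (inner ℝ (u (φ i)) (c • w) : ℝ))
        = fun i => c * (inner ℝ (u (φ i)) w : ℝ) := by
      funext i; rw [real_inner_smul_right]
    exact tendsto_nhds_unique (h2 ▸ hf (c • w)) h1
  have hbound : ∀ w, |f w| ≤ C * ‖w‖ := by
    intro w
    refine le_of_tendsto (hf w).abs (Eventually.of_forall fun i => ?_)
    exact le_trans (abs_real_inner_le_norm _ _)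
      (mul_le_mul_of_nonneg_right (hu _) (norm_nonneg _))
  let F : X →ₗ[ℝ] ℝ := { toFun := f, map_add' := hadd, map_smul' := hsmul }
  let Fc : X →L[ℝ] ℝ := LinearMap.mkContinuous F C (fun w => by
    simpa [F, Real.norm_eq_abs] using hbound w)
  refine ⟨(InnerProductSpace.toDual ℝ X).symm Fc, fun w => ?_⟩
  have h : (inner ℝ ((InnerProductSpace.toDual ℝ X).symm Fc) w : ℝ) = Fc w :=
    InnerProductSpace.toDual_symm_apply
  rw [h]
  exact hf w

/-- Weak lower semicontinuity of the squared norm. -/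
theorem weak_norm_sq_lsc {Y : Type*} [NormedAddCommGroup Y] [InnerProductSpace ℝ Y]
    (v : ℕ → Y) (l z : Y) (a : ℝ) (hw : WeakTendsto v l)
    (ha : Tendsto (fun i => ‖v i - z‖^2) atTop (𝓝 a)) :
    ‖l - z‖^2 ≤ a := by
  have ha0 : 0 ≤ a := le_of_tendsto_of_tendsto' tendsto_const_nhds ha
    (fun i => sq_nonneg _)
  have hnorm : Tendsto (fun i => ‖v i - z‖) atTop (𝓝 (Real.sqrt a)) := by
    have := ha.sqrt
    convert this using 2 with i
    · exact (Real.sqrt_sq (norm_nonneg _)).symm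
  have hinner : Tendsto (fun i => (inner ℝ (v i - z) (l - z) : ℝ)) atTop (𝓝 (‖l - z‖^2)) := by
    have h1 : Tendsto (fun i => (inner ℝ (v i) (l - z) : ℝ) - (inner ℝ z (l - z) : ℝ)) atTop
        (𝓝 ((inner ℝ l (l - z) : ℝ) - (inner ℝ z (l - z) : ℝ))) := (hw (l - z)).sub tendsto_const_nhds
    have h2 : (fun i => (inner ℝ (v i - z) (l - z) : ℝ))
        = fun i => (inner ℝ (v i) (l - z) : ℝ) - (inner ℝ z (l - z) : ℝ) := by
      funext i; rw [inner_sub_left]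
    have h3 : (inner ℝ l (l - z) : ℝ) - (inner ℝ z (l - z) : ℝ) = ‖l - z‖^2 := by
      rw [← inner_sub_left, real_inner_self_eq_norm_sq]
    rw [h2, ← h3]; exact h1
  have hle : ‖l - z‖^2 ≤ Real.sqrt a * ‖l - z‖ := by
    refine le_of_tendsto_of_tendsto' hinner (hnorm.mul_const _) (fun i => ?_)
    exact le_trans (real_inner_le_norm _ _) le_rfl
  rcases eq_or_lt_of_le (norm_nonneg (l - z)) with h0 | h0
  · rw [← h0]; simpa using ha0
  · have h : ‖l - z‖ ≤ Real.sqrt a := by nlinarith [sq_nonneg (‖l - z‖)]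
    calc ‖l - z‖^2 ≤ (Real.sqrt a)^2 := by nlinarith [Real.sqrt_nonneg a]
      _ = a := Real.sq_sqrt ha0

/-- Mazur-type lemma: a convex strongly closed set is weakly sequentially closed. -/
theorem weakly_closed_of_convex_closed {X : Type*} [NormedAddCommGroup X]
    [InnerProductSpace ℝ X] [CompleteSpace X]
    (Cs : Set X) (hconv : Convex ℝ Cs) (hcl : IsClosed Cs)
    (u : ℕ → X) (l : X) (hu : ∀ i, u i ∈ Cs) (hw : WeakTendsto u l) : l ∈ Cs := by
  by_contra hl
  obtain ⟨f, s, hfs, hsl⟩ := geometric_hahn_banach_closed_point hconv hcl hl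
  set e := (InnerProductSpace.toDual ℝ X).symm f with he
  have hf : ∀ x : X, f x = (inner ℝ e x : ℝ) := fun x =>
    (InnerProductSpace.toDual_symm_apply).symm
  have hlim : Tendsto (fun i => f (u i)) atTop (𝓝 (f l)) := by
    simp only [hf]
    have := hw e
    simp only [real_inner_comm] at this ⊢
    exact this
  have : f l ≤ s := le_of_tendsto hlim (Eventually.of_forall fun i => (hfs (u i) (hu i)).le)
  linarith

/-- Shifted truncation of an `EReal` to `ℝ≥0∞`. -/
def toE (c : ℝ) (x : EReal) : ℝ≥0∞ := if x = ⊤ then ⊤ else ENNReal.ofReal (x.toReal - c)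

lemma toE_eq_top_iff {c : ℝ} {x : EReal} : toE c x = ⊤ ↔ x = ⊤ := by
  unfold toE; split_ifs with h
  · simp [h]
  · simp [h, ENNReal.ofReal_ne_top]

lemma toE_of_ne_top {c : ℝ} {x : EReal} (h : x ≠ ⊤) :
    toE c x = ENNReal.ofReal (x.toReal - c) := if_neg h

lemma measurable_toE (c : ℝ) : Measurable (toE c) := by
  unfold toE
  exact Measurable.ite (measurableSet_eq) measurable_const
    (ENNReal.measurable_ofReal.comp (measurable_ereal_toReal.sub measurable_const))

lemma ofReal_le_toE {c r : ℝ} {x : EReal} (h : (r : EReal) < x) :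
    ENNReal.ofReal (r - c) ≤ toE c x := by
  unfold toE
  split_ifs with htop
  · exact le_top
  · refine ENNReal.ofReal_le_ofReal ?_
    have : r ≤ x.toReal := by
      have := EReal.toReal_le_toReal h.le (EReal.coe_ne_bot r) htop
      simpa using this
    linarith

/-- Pointwise lower semicontinuity transported to `ℝ≥0∞` liminf along a sequence. -/
lemma toE_le_liminf {k : ℕ} {g : Vec k → EReal}
    (hlsc : LowerSemicontinuous g) (hbot : ∀ v, g v ≠ ⊥) (c : ℝ)
    {p : ℕ → Vec k} {q : Vec k} (hp : Tendsto p atTop (𝓝 q)) :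
    toE c (g q) ≤ liminf (fun i => toE c (g (p i))) atTop := by
  set L := liminf (fun i => toE c (g (p i))) atTop with hL
  have key : ∀ r : ℝ, (r : EReal) < g q → ENNReal.ofReal (r - c) ≤ L := by
    intro r hr
    have hev2 : ∀ᶠ i in atTop, ENNReal.ofReal (r - c) ≤ toE c (g (p i)) :=
      (hp.eventually (hlsc q _ hr)).mono fun i hi => ofReal_le_toE hi
    calc ENNReal.ofReal (r - c) = liminf (fun _ : ℕ => ENNReal.ofReal (r - c)) atTop :=
        (liminf_const _).symm
      _ ≤ L := liminf_le_liminf hev2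
  by_cases htop : g q = ⊤
  · rw [htop]
    simp only [toE, if_pos rfl]
    by_contra hlt
    push_neg at hlt
    have hLne : L ≠ ⊤ := hlt.ne
    have h1 : ENNReal.ofReal (L.toReal + 1) ≤ L := by
      have := key (L.toReal + 1 + c) (by rw [htop]; exact EReal.coe_lt_top _)
      simpa using this
    have h2 : L < ENNReal.ofReal (L.toReal + 1) := by
      conv_lhs => rw [← ENNReal.ofReal_toReal hLne]
      exact ENNReal.ofReal_lt_ofReal_iff (by positivity) |>.2 (by linarith)
    exact absurd (lt_of_lt_of_le h2 h1) (lt_irrefl _)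
  · have hfin : g q = ((g q).toReal : EReal) := (EReal.coe_toReal htop (hbot q)).symm
    rw [toE_of_ne_top htop]
    refine ENNReal.le_of_forall_pos_le_add fun ε hε hLfin => ?_
    have hlt : ((((g q).toReal - ε) : ℝ) : EReal) < g q := by
      conv_rhs => rw [hfin]
      rw [EReal.coe_lt_coe_iff]
      have : (0:ℝ) < ε := hε
      linarith
    have h1 : ENNReal.ofReal ((g q).toReal - ε - c) ≤ L := key _ hlt
    calc ENNReal.ofReal ((g q).toReal - c)
        ≤ ENNReal.ofReal (((g q).toReal - ε - c) + ε) := by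
          refine ENNReal.ofReal_le_ofReal ?_; linarith
      _ ≤ ENNReal.ofReal ((g q).toReal - ε - c) + ENNReal.ofReal ε := ENNReal.ofReal_add_le
      _ ≤ L + ε := by refine add_le_add h1 ?_; simp

section IntG

variable {α : Type*} [MeasurableSpace α] {μ : Measure α} [IsFiniteMeasure μ] {k : ℕ}
  {g : Vec k → EReal} {c : ℝ}

omit [IsFiniteMeasure μ] in
lemma intG_le_coe_iff {u : α → Vec k} {t : ℝ} :
    intG μ g u ≤ (t : EReal) ↔
      ((∀ᵐ x ∂μ, g (u x) ≠ ⊤) ∧ Integrable (fun x => (g (u x)).toReal) μ)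
      ∧ (∫ x, (g (u x)).toReal ∂μ) ≤ t := by
  classical
  unfold intG
  split_ifs with h
  · rw [EReal.coe_le_coe_iff]
    exact ⟨fun h2 => ⟨h, h2⟩, fun h2 => h2.2⟩
  · constructor
    · intro h2; exact absurd h2 (EReal.coe_lt_top t).not_ge
    · intro h2; exact absurd h2.1 h

omit [IsFiniteMeasure μ] in
lemma intG_ne_bot {u : α → Vec k} : intG μ g u ≠ ⊥ := by
  unfold intG; split_ifs
  · exact EReal.coe_ne_bot _
  · simp

omit [IsFiniteMeasure μ] in
lemma intG_ne_top_iff {u : α → Vec k} :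
    intG μ g u ≠ ⊤ ↔
      (∀ᵐ x ∂μ, g (u x) ≠ ⊤) ∧ Integrable (fun x => (g (u x)).toReal) μ := by
  unfold intG; split_ifs with h
  · simp [h, EReal.coe_ne_top]
  · simp [h]

omit [IsFiniteMeasure μ] in
lemma intG_toReal_eq {u : α → Vec k}
    (h : (∀ᵐ x ∂μ, g (u x) ≠ ⊤) ∧ Integrable (fun x => (g (u x)).toReal) μ) :
    (intG μ g u).toReal = ∫ x, (g (u x)).toReal ∂μ := by
  unfold intG; rw [if_pos h, EReal.toReal_coe]

lemma hbot_of_hc (hc : ∀ v, (c : EReal) ≤ g v) : ∀ v, g v ≠ ⊥ :=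
  fun v => ((EReal.bot_lt_coe c).trans_le (hc v)).ne'

lemma toReal_ge_c (hc : ∀ v, (c : EReal) ≤ g v) {v : Vec k} (hv : g v ≠ ⊤) :
    c ≤ (g v).toReal := by
  have := EReal.toReal_le_toReal (hc v) (EReal.coe_ne_bot c) hv
  simpa using this

/-- lower bound for the integral -/
lemma integral_toReal_ge (hc : ∀ v, (c : EReal) ≤ g v) {u : α → Vec k}
    (h1 : ∀ᵐ x ∂μ, g (u x) ≠ ⊤) (h2 : Integrable (fun x => (g (u x)).toReal) μ) :
    c * (μ Set.univ).toReal ≤ ∫ x, (g (u x)).toReal ∂μ := by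
  have hmono : (fun _ : α => c) ≤ᵐ[μ] fun x => (g (u x)).toReal :=
    h1.mono fun x hx => toReal_ge_c hc hx
  have := integral_mono_ae (integrable_const c) h2 hmono
  rwa [integral_const, smul_eq_mul, mul_comm] at this

/-- The sublevel sets of `intG` are closed in `Lp`. -/
theorem intG_isClosed (hlsc : LowerSemicontinuous g) (hc : ∀ v, (c : EReal) ≤ g v) (t : ℝ) :
    IsClosed {u : Lp (Vec k) 2 μ | intG μ g (fun x => u x) ≤ (t : EReal)} := by
  have hbot : ∀ v, g v ≠ ⊥ := hbot_of_hc hc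
  have hgm : Measurable g := hlsc.measurable
  refine IsSeqClosed.isClosed ?_
  intro u l hu hul
  simp only [Set.mem_setOf_eq, intG_le_coe_iff] at hu ⊢
  have haesm : ∀ i : ℕ, AEStronglyMeasurable (fun x => (u i : α → Vec k) x) μ :=
    fun i => (Lp.aestronglyMeasurable (u i))
  have hnorm : Tendsto (fun i => eLpNorm ((u i : α → Vec k) - (l : α → Vec k)) 2 μ)
      atTop (𝓝 0) := by
    have h1 : Tendsto (fun i => ‖u i - l‖) atTop (𝓝 0) := by
      rw [← tendsto_iff_norm_sub_tendsto_zero]; exact hul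
    have h2 : ∀ i, eLpNorm ((u i : α → Vec k) - (l : α → Vec k)) 2 μ
        = eLpNorm ((u i - l : Lp (Vec k) 2 μ) : α → Vec k) 2 μ :=
      fun i => (eLpNorm_congr_ae (Lp.coeFn_sub (u i) l)).symm
    have h3 : ∀ i, ‖u i - l‖ = (eLpNorm ((u i - l : Lp (Vec k) 2 μ) : α → Vec k) 2 μ).toReal :=
      fun i => Lp.norm_def _
    simp only [h3] at h1
    simp only [h2]
    rw [← ENNReal.tendsto_toReal_iff (fun i => Lp.eLpNorm_ne_top _) (by norm_num)]
    exact h1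
  have htm : TendstoInMeasure μ (fun i => ((u i : α → Vec k))) atTop (l : α → Vec k) :=
    tendstoInMeasure_of_tendsto_eLpNorm_of_ne_top (by norm_num) (by norm_num)
      haesm (Lp.aestronglyMeasurable l) hnorm
  obtain ⟨ψ, hψ, hae⟩ := htm.exists_seq_tendsto_ae
  set μr := (μ Set.univ).toReal with hμr
  have hcμt : c * μr ≤ t := by
    refine le_trans (integral_toReal_ge hc (hu 0).1.1 (hu 0).1.2) (hu 0).2
  set q : ℕ → α → ℝ≥0∞ := fun i x => toE c (g ((u (ψ i) : α → Vec k) x)) with hq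
  set qlim : α → ℝ≥0∞ := fun x => toE c (g ((l : α → Vec k) x)) with hqlim
  have hqm : ∀ i, AEMeasurable (q i) μ := fun i =>
    ((measurable_toE c).comp hgm).comp_aemeasurable (haesm (ψ i)).aemeasurable
  have hqlm : AEMeasurable qlim μ :=
    ((measurable_toE c).comp hgm).comp_aemeasurable (Lp.aestronglyMeasurable l).aemeasurable
  have hptw : ∀ᵐ x ∂μ, qlim x ≤ liminf (fun i => q i x) atTop :=
    hae.mono fun x hx => toE_le_liminf hlsc hbot c hx
  have hqint : ∀ i, ∫⁻ x, q i x ∂μ ≤ ENNReal.ofReal (t - c * μr) := by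
    intro i
    obtain ⟨⟨hne, hint⟩, hle⟩ := hu (ψ i)
    have heq : ∀ᵐ x ∂μ, q i x
        = ENNReal.ofReal ((g ((u (ψ i) : α → Vec k) x)).toReal - c) :=
      hne.mono fun x hx => toE_of_ne_top hx
    have hint' : Integrable (fun x => (g ((u (ψ i) : α → Vec k) x)).toReal - c) μ :=
      hint.sub (integrable_const c)
    have hnn : 0 ≤ᵐ[μ] fun x => (g ((u (ψ i) : α → Vec k) x)).toReal - c :=
      hne.mono fun x hx => by
        simp only [Pi.zero_apply]; have := toReal_ge_c hc hx; linarith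
    calc ∫⁻ x, q i x ∂μ
        = ∫⁻ x, ENNReal.ofReal ((g ((u (ψ i) : α → Vec k) x)).toReal - c) ∂μ :=
          lintegral_congr_ae heq
      _ = ENNReal.ofReal (∫ x, ((g ((u (ψ i) : α → Vec k) x)).toReal - c) ∂μ) :=
          (ofReal_integral_eq_lintegral_ofReal hint' hnn).symm
      _ ≤ ENNReal.ofReal (t - c * μr) := by
          refine ENNReal.ofReal_le_ofReal ?_
          rw [integral_sub hint (integrable_const c), integral_const, smul_eq_mul, mul_comm]
          have : μ.real Set.univ = μr := rfl
          rw [this]; exact sub_le_sub_right hle _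
  have hfatou : ∫⁻ x, qlim x ∂μ ≤ ENNReal.ofReal (t - c * μr) := by
    calc ∫⁻ x, qlim x ∂μ ≤ ∫⁻ x, liminf (fun i => q i x) atTop ∂μ := lintegral_mono_ae hptw
      _ ≤ liminf (fun i => ∫⁻ x, q i x ∂μ) atTop := lintegral_liminf_le' hqm
      _ ≤ liminf (fun _ : ℕ => ENNReal.ofReal (t - c * μr)) atTop :=
          liminf_le_liminf (Eventually.of_forall hqint)
      _ = ENNReal.ofReal (t - c * μr) := liminf_const _
  have hltop : ∫⁻ x, qlim x ∂μ ≠ ⊤ := ne_top_of_le_ne_top ENNReal.ofReal_ne_top hfatou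
  have hne : ∀ᵐ x ∂μ, g ((l : α → Vec k) x) ≠ ⊤ := by
    filter_upwards [ae_lt_top' hqlm hltop] with x hx
    intro hcon
    rw [show qlim x = toE c (g ((l : α → Vec k) x)) from rfl, toE_eq_top_iff.2 hcon] at hx
    exact absurd hx (lt_irrefl _)
  set fl : α → ℝ := fun x => (g ((l : α → Vec k) x)).toReal with hfl
  have hflm : AEStronglyMeasurable fl μ :=
    ((measurable_ereal_toReal.comp hgm).comp_aemeasurable
      (Lp.aestronglyMeasurable l).aemeasurable).aestronglyMeasurable
  have hqlim_eq : ∀ᵐ x ∂μ, qlim x = ENNReal.ofReal (fl x - c) :=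
    hne.mono fun x hx => toE_of_ne_top hx
  have hflint : Integrable fl μ := by
    refine ⟨hflm, ?_⟩
    rw [hasFiniteIntegral_iff_norm]
    have hb : ∀ᵐ x ∂μ, ENNReal.ofReal ‖fl x‖ ≤ qlim x + ENNReal.ofReal |c| := by
      filter_upwards [hne, hqlim_eq] with x hx heq
      have h1 : c ≤ fl x := toReal_ge_c hc hx
      have h2 : ‖fl x‖ ≤ (fl x - c) + |c| := by
        rw [Real.norm_eq_abs]
        refine abs_le.2 ⟨?_, ?_⟩
        · have := neg_abs_le c; linarith
        · have := le_abs_self c; linarith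
      calc ENNReal.ofReal ‖fl x‖ ≤ ENNReal.ofReal ((fl x - c) + |c|) :=
            ENNReal.ofReal_le_ofReal h2
        _ ≤ ENNReal.ofReal (fl x - c) + ENNReal.ofReal |c| := ENNReal.ofReal_add_le
        _ = qlim x + ENNReal.ofReal |c| := by rw [heq]
    calc ∫⁻ x, ENNReal.ofReal ‖fl x‖ ∂μ ≤ ∫⁻ x, (qlim x + ENNReal.ofReal |c|) ∂μ :=
          lintegral_mono_ae hb
      _ = ∫⁻ x, qlim x ∂μ + ENNReal.ofReal |c| * μ Set.univ := by
          rw [lintegral_add_right _ measurable_const, lintegral_const]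
      _ < ⊤ := by
          refine ENNReal.add_lt_top.2 ⟨lt_of_le_of_lt hfatou ENNReal.ofReal_lt_top, ?_⟩
          exact ENNReal.mul_lt_top ENNReal.ofReal_lt_top (measure_lt_top μ _)
  refine ⟨⟨hne, hflint⟩, ?_⟩
  have hnn : 0 ≤ᵐ[μ] fun x => fl x - c := hne.mono fun x hx => by
    simp only [Pi.zero_apply]; have := toReal_ge_c hc hx
    simp only [hfl]; linarith
  have hint' : Integrable (fun x => fl x - c) μ := hflint.sub (integrable_const c)
  have h5 : ∫ x, (fl x - c) ∂μ ≤ t - c * μr := by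
    have h6 : ENNReal.ofReal (∫ x, (fl x - c) ∂μ) ≤ ENNReal.ofReal (t - c * μr) := by
      rw [ofReal_integral_eq_lintegral_ofReal hint' hnn]
      calc ∫⁻ x, ENNReal.ofReal (fl x - c) ∂μ = ∫⁻ x, qlim x ∂μ :=
            (lintegral_congr_ae hqlim_eq).symm
        _ ≤ ENNReal.ofReal (t - c * μr) := hfatou
    have h7 := ENNReal.toReal_mono ENNReal.ofReal_ne_top h6
    rw [ENNReal.toReal_ofReal (integral_nonneg_of_ae hnn),
      ENNReal.toReal_ofReal (by linarith)] at h7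
    exact h7
  have h8 : ∫ x, (fl x - c) ∂μ = (∫ x, fl x ∂μ) - c * μr := by
    rw [integral_sub hflint (integrable_const c), integral_const, smul_eq_mul, mul_comm]
    rfl
  linarith [h5, h8.symm.trans_le h5]

/-- The sublevel sets of `intG` are convex. -/
theorem intG_convex (hlsc : LowerSemicontinuous g) (hconv : EConvexOn g)
    (hc : ∀ v, (c : EReal) ≤ g v) (t : ℝ) :
    Convex ℝ {u : Lp (Vec k) 2 μ | intG μ g (fun x => u x) ≤ (t : EReal)} := by
  have hbot : ∀ v, g v ≠ ⊥ := hbot_of_hc hc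
  intro u hu v hv a b ha hb hab
  simp only [Set.mem_setOf_eq, intG_le_coe_iff] at hu hv ⊢
  obtain ⟨⟨hu1, hu2⟩, hu3⟩ := hu
  obtain ⟨⟨hv1, hv2⟩, hv3⟩ := hv
  set w := a • u + b • v with hw
  have hcf : (w : α → Vec k) =ᵐ[μ] fun x => a • (u : α → Vec k) x + b • (v : α → Vec k) x := by
    filter_upwards [Lp.coeFn_add (a • u) (b • v), Lp.coeFn_smul a u, Lp.coeFn_smul b v]
      with x h1 h2 h3
    rw [hw, h1, Pi.add_apply, h2, h3, Pi.smul_apply, Pi.smul_apply]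
  have hle : ∀ᵐ x ∂μ, g ((w : α → Vec k) x)
      ≤ ((a * (g ((u : α → Vec k) x)).toReal
          + b * (g ((v : α → Vec k) x)).toReal : ℝ) : EReal) := by
    filter_upwards [hcf, hu1, hv1] with x h1 h2 h3
    rw [h1]
    refine le_trans (hconv _ _ a b ha hb hab) ?_
    rw [EReal.coe_add, EReal.coe_mul, EReal.coe_mul,
      EReal.coe_toReal h2 (hbot _), EReal.coe_toReal h3 (hbot _)]
  have hne : ∀ᵐ x ∂μ, g ((w : α → Vec k) x) ≠ ⊤ :=
    hle.mono fun x hx => (lt_of_le_of_lt hx (EReal.coe_lt_top _)).ne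
  have htr : ∀ᵐ x ∂μ, (g ((w : α → Vec k) x)).toReal
      ≤ a * (g ((u : α → Vec k) x)).toReal + b * (g ((v : α → Vec k) x)).toReal := by
    filter_upwards [hle, hne] with x h1 h2
    have := EReal.toReal_le_toReal h1 (hbot _) (EReal.coe_ne_top _)
    exact this.trans_eq (EReal.toReal_coe _)
  have hcle : ∀ᵐ x ∂μ, c ≤ (g ((w : α → Vec k) x)).toReal :=
    hne.mono fun x hx => toReal_ge_c hc hx
  have hH : Integrable (fun x => |a * (g ((u : α → Vec k) x)).toReal
      + b * (g ((v : α → Vec k) x)).toReal| + |c|) μ :=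
    (((hu2.const_mul a).add (hv2.const_mul b)).abs).add (integrable_const _)
  have hwm : AEStronglyMeasurable (fun x => (g ((w : α → Vec k) x)).toReal) μ :=
    ((measurable_ereal_toReal.comp hlsc.measurable).comp_aemeasurable
      (Lp.aestronglyMeasurable w).aemeasurable).aestronglyMeasurable
  have hwint : Integrable (fun x => (g ((w : α → Vec k) x)).toReal) μ := by
    refine hH.mono' hwm ?_
    filter_upwards [htr, hcle] with x h1 h2
    rw [Real.norm_eq_abs]
    set A := a * (g ((u : α → Vec k) x)).toReal + b * (g ((v : α → Vec k) x)).toReal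
    refine abs_le.2 ⟨?_, ?_⟩
    · have := neg_abs_le c; have := abs_nonneg A; linarith
    · have := le_abs_self A; have := abs_nonneg c; linarith
  refine ⟨⟨hne, hwint⟩, ?_⟩
  calc ∫ x, (g ((w : α → Vec k) x)).toReal ∂μ
      ≤ ∫ x, (a * (g ((u : α → Vec k) x)).toReal + b * (g ((v : α → Vec k) x)).toReal) ∂μ :=
        integral_mono_ae hwint ((hu2.const_mul a).add (hv2.const_mul b)) htr
    _ = a * ∫ x, (g ((u : α → Vec k) x)).toReal ∂μ
        + b * ∫ x, (g ((v : α → Vec k) x)).toReal ∂μ := by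
        rw [integral_add (hu2.const_mul a) (hv2.const_mul b),
          integral_const_mul, integral_const_mul]
    _ ≤ a * t + b * t := by
        refine add_le_add ?_ ?_
        · exact mul_le_mul_of_nonneg_left hu3 ha
        · exact mul_le_mul_of_nonneg_left hv3 hb
    _ = t := by rw [← add_mul, hab, one_mul]

end IntG

/-- A lower semicontinuous `EReal`-valued function which never takes the value `⊥` and
equals `⊤` outside of a compact set is bounded below by a real constant. -/
lemma exists_lower_bound {k : ℕ} {g : Vec k → EReal} (hlsc : LowerSemicontinuous g)
    (hbot : ∀ v, g v ≠ ⊥) {K : Set (Vec k)} (hK : IsCompact K)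
    (hout : ∀ v, v ∉ K → g v = ⊤) : ∃ c : ℝ, ∀ v, (c : EReal) ≤ g v := by
  by_contra h
  push_neg at h
  have h' : ∀ i : ℕ, ∃ v : Vec k, g v < ((-(i:ℝ) : ℝ) : EReal) := fun i => h (-(i:ℝ))
  choose v hv using h'
  have hvK : ∀ i, v i ∈ K := by
    intro i
    by_contra hiK
    have h2 := hv i
    rw [hout _ hiK] at h2
    exact absurd h2 (by simp)
  obtain ⟨p, hpK, φ, hφ, hconv⟩ := hK.tendsto_subseq hvK
  set r : ℝ := if htop : g p = ⊤ then 0 else (g p).toReal - 1 with hr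
  have hrlt : (r : EReal) < g p := by
    rw [hr]
    split_ifs with htop
    · rw [htop]; exact EReal.coe_lt_top _
    · conv_rhs => rw [← EReal.coe_toReal htop (hbot p)]
      rw [EReal.coe_lt_coe_iff]; linarith
  have hev : ∀ᶠ i in atTop, (r : EReal) < g (v (φ i)) := hconv.eventually (hlsc p _ hrlt)
  obtain ⟨N, hN⟩ := exists_nat_gt (-r)
  obtain ⟨i, hi1, hi2⟩ := (hev.and (eventually_ge_atTop N)).exists
  have h1 : (r : EReal) < ((-(φ i : ℝ) : ℝ) : EReal) := lt_trans hi1 (hv (φ i))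
  rw [EReal.coe_lt_coe_iff] at h1
  have h2 : (i : ℝ) ≤ (φ i : ℝ) := by exact_mod_cast hφ.le_apply
  have h3 : (N : ℝ) ≤ (i : ℝ) := by exact_mod_cast hi2
  linarith

lemma ereal_le_coe_of_forall {x : EReal} {y : ℝ}
    (h : ∀ ε : ℝ, 0 < ε → x ≤ ((y + ε : ℝ) : EReal)) : x ≤ (y : EReal) := by
  by_contra hc
  push_neg at hc
  by_cases htop : x = ⊤
  · have := h 1 one_pos
    rw [htop] at this
    exact absurd this (EReal.coe_lt_top _).not_ge
  · have hxbot : x ≠ ⊥ := ((EReal.bot_lt_coe y).trans hc).ne'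
    have hx : x = ((x.toReal : ℝ) : EReal) := (EReal.coe_toReal htop hxbot).symm
    rw [hx] at hc h
    rw [EReal.coe_lt_coe_iff] at hc
    have := h ((x.toReal - y)/2) (by linarith)
    rw [EReal.coe_le_coe_iff] at this
    linarith


/-- General existence theorem over an abstract finite measure. -/
theorem exists_min_general {α : Type*} [MeasurableSpace α] (μ : Measure α) [IsFiniteMeasure μ]
    {k : ℕ} [SecondCountableTopology (Lp (Vec k) 2 μ)]
    {Y : Type*} [NormedAddCommGroup Y] [InnerProductSpace ℝ Y] [CompleteSpace Y] (z : Y)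
    {g : Vec k → EReal} (hconv : EConvexOn g) (hlsc : LowerSemicontinuous g)
    {c : ℝ} (hc : ∀ v, (c : EReal) ≤ g v)
    {R : ℝ} (hR : ∀ v, g v ≠ ⊤ → ‖v‖ ≤ R)
    (S : Lp (Vec k) 2 μ → Y)
    (hS : ∀ (u : ℕ → Lp (Vec k) 2 μ) (l : Lp (Vec k) 2 μ),
      WeakTendsto u l → WeakTendsto (fun i => S (u i)) (S l)) :
    ∃ ubar : Lp (Vec k) 2 μ,
      ∀ u : Lp (Vec k) 2 μ, energy μ S z g ubar ≤ energy μ S z g u := by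
  classical
  set μr := (μ Set.univ).toReal with hμr
  by_cases hfin : ∀ u : Lp (Vec k) 2 μ, energy μ S z g u = ⊤
  · exact ⟨0, fun u => by rw [hfin u]; exact le_top⟩
  push_neg at hfin
  obtain ⟨u₀, hu₀⟩ := hfin
  -- decomposition of finite energies
  have hdec : ∀ u : Lp (Vec k) 2 μ, energy μ S z g u ≠ ⊤ →
      intG μ g (fun x => u x) ≠ ⊤ ∧
      energy μ S z g u
        = ((((1/2 : ℝ) * ‖S u - z‖^2) + (intG μ g (fun x => u x)).toReal : ℝ) : EReal) := by
    intro u hu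
    by_cases hi : intG μ g (fun x => u x) = ⊤
    · exfalso
      apply hu
      show (((1/2 : ℝ) * ‖S u - z‖^2 : ℝ) : EReal) + intG μ g (fun x => u x) = ⊤
      rw [hi, EReal.coe_add_top]
    · refine ⟨hi, ?_⟩
      show (((1/2 : ℝ) * ‖S u - z‖^2 : ℝ) : EReal) + intG μ g (fun x => u x) = _
      conv_lhs => rw [← EReal.coe_toReal hi intG_ne_bot]
      rw [← EReal.coe_add]
  set E' : Set ℝ := {r : ℝ | ∃ u : Lp (Vec k) 2 μ, energy μ S z g u = (r : EReal)} with hE'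
  have hE'ne : E'.Nonempty := ⟨_, u₀, (hdec u₀ hu₀).2⟩
  have hE'lb : ∀ r ∈ E', c * μr ≤ r := by
    rintro r ⟨u, hu⟩
    have hne : energy μ S z g u ≠ ⊤ := by rw [hu]; exact EReal.coe_ne_top r
    obtain ⟨hi, hrep⟩ := hdec u hne
    have hcond := intG_ne_top_iff.1 hi
    have hB : (intG μ g (fun x => u x)).toReal = ∫ x, (g (u x)).toReal ∂μ :=
      intG_toReal_eq hcond
    have hBlb : c * μr ≤ (intG μ g (fun x => u x)).toReal := by
      rw [hB]; exact integral_toReal_ge hc hcond.1 hcond.2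
    have hreq : r = ((1/2 : ℝ) * ‖S u - z‖^2) + (intG μ g (fun x => u x)).toReal := by
      have := hrep.symm.trans hu
      exact (EReal.coe_eq_coe_iff.1 this).symm
    have hA0 : 0 ≤ (1/2 : ℝ) * ‖S u - z‖^2 := by positivity
    rw [hreq] at *
    linarith
  have hbdd : BddBelow E' := ⟨c * μr, hE'lb⟩
  set I := sInf E' with hI
  have hseq : ∀ i : ℕ, ∃ (u : Lp (Vec k) 2 μ) (r : ℝ),
      energy μ S z g u = (r : EReal) ∧ r < I + 1/((i:ℝ)+1) := by
    intro i
    have hpos : (0:ℝ) < 1/((i:ℝ)+1) := by positivity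
    obtain ⟨r, hrE, hrlt⟩ := exists_lt_of_csInf_lt hE'ne (lt_add_of_pos_right I hpos)
    obtain ⟨u, hu⟩ := hrE
    exact ⟨u, r, hu, hrlt⟩
  choose uu rr hur hrlt using hseq
  have hrI : ∀ i, I ≤ rr i := fun i => csInf_le hbdd ⟨uu i, hur i⟩
  have hrtend : Tendsto rr atTop (𝓝 I) := by
    have h1 : Tendsto (fun i : ℕ => I + 1/((i:ℝ)+1)) atTop (𝓝 (I + 0)) :=
      tendsto_const_nhds.add tendsto_one_div_add_atTop_nhds_zero_nat
    rw [add_zero] at h1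
    exact tendsto_of_tendsto_of_tendsto_of_le_of_le tendsto_const_nhds h1 hrI
      (fun i => (hrlt i).le)
  set A : ℕ → ℝ := fun i => (1/2 : ℝ) * ‖S (uu i) - z‖^2 with hA
  have henet : ∀ i, energy μ S z g (uu i) ≠ ⊤ := fun i => by
    rw [hur i]; exact EReal.coe_ne_top _
  have hine : ∀ i, intG μ g (fun x => uu i x) ≠ ⊤ := fun i => (hdec _ (henet i)).1
  set B : ℕ → ℝ := fun i => (intG μ g (fun x => uu i x)).toReal with hB
  have hAB : ∀ i, A i + B i = rr i := by
    intro i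
    have := (hdec _ (henet i)).2.symm.trans (hur i)
    exact EReal.coe_eq_coe_iff.1 this
  have hcond : ∀ i, (∀ᵐ x ∂μ, g (uu i x) ≠ ⊤)
      ∧ Integrable (fun x => (g (uu i x)).toReal) μ := fun i => intG_ne_top_iff.1 (hine i)
  have hBeq : ∀ i, B i = ∫ x, (g (uu i x)).toReal ∂μ := fun i => intG_toReal_eq (hcond i)
  have hB_lb : ∀ i, c * μr ≤ B i := fun i => by
    rw [hBeq i]; exact integral_toReal_ge hc (hcond i).1 (hcond i).2
  have hA0 : ∀ i, 0 ≤ A i := fun i => by positivity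
  have hrub : ∀ i, rr i ≤ I + 1 := by
    intro i
    have h1 : 1/((i:ℝ)+1) ≤ 1 := by
      rw [div_le_one (by positivity)]
      have : (0:ℝ) ≤ (i:ℝ) := Nat.cast_nonneg i
      linarith
    have := hrlt i
    linarith
  -- uniform norm bound
  set C₀ : ℝ := ((μ Set.univ) ^ ((2:ENNReal).toReal)⁻¹ * ENNReal.ofReal R).toReal with hC₀
  have hnormb : ∀ i, ‖uu i‖ ≤ C₀ := by
    intro i
    have haeK : ∀ᵐ x ∂μ, ‖(uu i : _ → Vec k) x‖ ≤ R := by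
      filter_upwards [(hcond i).1] with x hx
      exact hR _ hx
    have h1 : eLpNorm ((uu i : _ → Vec k)) 2 μ
        ≤ μ Set.univ ^ ((2:ENNReal).toReal)⁻¹ * ENNReal.ofReal R :=
      eLpNorm_le_of_ae_bound haeK
    rw [Lp.norm_def]
    refine ENNReal.toReal_mono ?_ h1
    exact ENNReal.mul_ne_top
      (ENNReal.rpow_ne_top_of_nonneg (by positivity) (measure_ne_top μ _))
      ENNReal.ofReal_ne_top
  obtain ⟨φ, hφ, l, hwl⟩ := weak_seq_compact uu C₀ hnormb
  -- convergent subsequence of the quadratic part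
  have hAbd : ∀ i, A (φ i) ∈ Icc (0:ℝ) (I + 1 - c*μr) := by
    intro i
    refine ⟨hA0 _, ?_⟩
    have h1 := hAB (φ i); have h2 := hB_lb (φ i); have h3 := hrub (φ i)
    linarith
  obtain ⟨aInf, -, ψ, hψ, hAconv⟩ :=
    tendsto_subseq_of_bounded (isCompact_Icc (a := (0:ℝ)) (b := I + 1 - c*μr)).isBounded hAbd
  set θ : ℕ → ℕ := φ ∘ ψ with hθ
  have hθmono : StrictMono θ := hφ.comp hψ
  have hwθ : WeakTendsto (fun j => uu (θ j)) l := fun w => (hwl w).comp hψ.tendsto_atTop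
  have hBθ : Tendsto (fun j => B (θ j)) atTop (𝓝 (I - aInf)) := by
    have h1 : Tendsto (fun j => rr (θ j) - A (θ j)) atTop (𝓝 (I - aInf)) :=
      (hrtend.comp hθmono.tendsto_atTop).sub hAconv
    refine h1.congr fun j => ?_
    have := hAB (θ j); linarith
  have hSθ : WeakTendsto (fun j => S (uu (θ j))) (S l) := hS _ l hwθ
  have hnsq : Tendsto (fun j => ‖S (uu (θ j)) - z‖^2) atTop (𝓝 (2*aInf)) := by
    have h1 : Tendsto (fun j => 2 * A (θ j)) atTop (𝓝 (2*aInf)) := hAconv.const_mul 2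
    refine h1.congr fun j => ?_
    rw [hA]; ring
  have hlsq : ‖S l - z‖^2 ≤ 2*aInf := weak_norm_sq_lsc _ _ _ _ hSθ hnsq
  -- lower semicontinuity of the integral part
  have hIl : intG μ g (fun x => l x) ≤ ((I - aInf : ℝ) : EReal) := by
    refine ereal_le_coe_of_forall fun ε hε => ?_
    set t := I - aInf + ε with ht
    have hev : ∀ᶠ j in atTop, B (θ j) ≤ t :=
      (hBθ.eventually_lt_const (lt_add_of_pos_right _ hε)).mono fun j h => h.le
    obtain ⟨N, hN⟩ := eventually_atTop.1 hev
    have hmem : ∀ j : ℕ, uu (θ (j + N))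
        ∈ {u : Lp (Vec k) 2 μ | intG μ g (fun x => u x) ≤ (t : EReal)} := by
      intro j
      simp only [mem_setOf_eq]
      have h1 : intG μ g (fun x => uu (θ (j+N)) x) = ((B (θ (j+N)) : ℝ) : EReal) :=
        (EReal.coe_toReal (hine _) intG_ne_bot).symm
      rw [h1, EReal.coe_le_coe_iff]
      exact hN _ (Nat.le_add_left N j)
    have hwtail : WeakTendsto (fun j => uu (θ (j + N))) l :=
      fun w => (hwθ w).comp (tendsto_add_atTop_nat N)
    exact weakly_closed_of_convex_closed _ (intG_convex hlsc hconv hc t)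
      (intG_isClosed hlsc hc t) _ l hmem hwtail
  refine ⟨l, fun u => ?_⟩
  have hel : energy μ S z g l ≤ ((I : ℝ) : EReal) := by
    show (((1/2 : ℝ) * ‖S l - z‖^2 : ℝ) : EReal) + intG μ g (fun x => l x) ≤ _
    calc (((1/2 : ℝ) * ‖S l - z‖^2 : ℝ) : EReal) + intG μ g (fun x => l x)
        ≤ ((aInf : ℝ) : EReal) + ((I - aInf : ℝ) : EReal) :=
          add_le_add (EReal.coe_le_coe_iff.2 (by linarith)) hIl
      _ = ((I : ℝ) : EReal) := by rw [← EReal.coe_add]; ring_nf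
  by_cases hu : energy μ S z g u = ⊤
  · rw [hu]; exact le_top
  · have hrep := (hdec u hu).2
    have hmem : ((1/2 : ℝ) * ‖S u - z‖^2) + (intG μ g (fun x => u x)).toReal ∈ E' :=
      ⟨u, hrep⟩
    have hIle : I ≤ ((1/2 : ℝ) * ‖S u - z‖^2) + (intG μ g (fun x => u x)).toReal :=
      csInf_le hbdd hmem
    calc energy μ S z g u
        = ((((1/2 : ℝ) * ‖S u - z‖^2) + (intG μ g (fun x => u x)).toReal : ℝ) : EReal) := hrep
      _ ≥ ((I : ℝ) : EReal) := EReal.coe_le_coe_iff.2 hIle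
      _ ≥ energy μ S z g l := hel


/-- existence of minimizers: if the control-to-state operator `S` is
weak-to-weak (sequentially) continuous, then the energy
`E(u) = ½‖S u − z‖² + ∫_Ω g(u(x)) dx` admits a global minimizer on `U = L²(Ω;ℝᵐ)`. -/
theorem existence_of_minimizers
    {n m : ℕ} (hm : 2 ≤ m)
    (Ω : Set (Vec n)) (hΩopen : IsOpen Ω) (hΩbdd : Bornology.IsBounded Ω)
    {Y : Type*} [NormedAddCommGroup Y] [InnerProductSpace ℝ Y] [CompleteSpace Y] (z : Y)
    (M : Finset (Vec m)) (g : Vec m → EReal)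
    (hproper : EProper g) (hconv : EConvexOn g) (hlsc : LowerSemicontinuous g)
    (hdom : {v | g v ≠ ⊤} = convexHull ℝ (M : Set (Vec m)))
    (S : Lp (Vec m) 2 (volume.restrict Ω) → Y)
    (hS : ∀ (u : ℕ → Lp (Vec m) 2 (volume.restrict Ω)) (l : Lp (Vec m) 2 (volume.restrict Ω)),
      WeakTendsto u l → WeakTendsto (fun i => S (u i)) (S l)) :
    ∃ ubar : Lp (Vec m) 2 (volume.restrict Ω),
      ∀ u : Lp (Vec m) 2 (volume.restrict Ω),
        energy (volume.restrict Ω) S z g ubar ≤ energy (volume.restrict Ω) S z g u := by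
  haveI : IsFiniteMeasure (volume.restrict Ω) :=
    ⟨by rw [Measure.restrict_apply_univ]; exact hΩbdd.measure_lt_top⟩
  haveI f1 : Fact ((1:ENNReal) ≤ 2) := ⟨by norm_num⟩
  haveI f2 : Fact ((2:ENNReal) ≠ ⊤) := ⟨by norm_num⟩
  haveI : SecondCountableTopology (Lp (Vec m) 2 (volume.restrict Ω)) :=
    MeasureTheory.Lp.SecondCountableTopology
  have hbot : ∀ v, g v ≠ ⊥ := hproper.2
  have hKc : IsCompact (convexHull ℝ (M : Set (Vec m))) := M.finite_toSet.isCompact_convexHull (𝕜 := ℝ)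
  have hout : ∀ v, v ∉ convexHull ℝ (M : Set (Vec m)) → g v = ⊤ := by
    intro v hvK
    by_contra hne
    have hmem : v ∈ {v | g v ≠ ⊤} := hne
    rw [hdom] at hmem
    exact hvK hmem
  obtain ⟨c, hc⟩ := exists_lower_bound hlsc hbot hKc hout
  obtain ⟨R, hR⟩ := hKc.isBounded.exists_norm_le
  have hR' : ∀ v, g v ≠ ⊤ → ‖v‖ ≤ R := by
    intro v hv
    have hmem : v ∈ {v | g v ≠ ⊤} := hv
    rw [hdom] at hmem
    exact hR _ hmem
  exact exists_min_general (volume.restrict Ω) z hconv hlsc hc hR' S hS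
end
end

section
/- Let z_n → z strongly in Y and suppose S : U → Y is weak-to-weak continuous and compact. Then any sequence {u_n} of minimizers of E^{z_n} contains a subsequence converging weakly in U to a minimizer ū of E^z, and along this subsequence the states y_n = S(u_n) converge strongly in Y to ȳ = S(ū). -/
open MeasureTheory Set Filter Topology

noncomputable section

/-- The convex subdifferential of an extended-real-valued function on a real inner
product space. -/
def ESubdiff {X : Type*} [NormedAddCommGroup X] [InnerProductSpace ℝ X]
    (f : X → EReal) (u : X) : Set X :=
  {p | ∀ v, f u + ((inner ℝ p (v - u) : ℝ) : EReal) ≤ f v}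

/-- The Fenchel (Legendre–Fenchel) conjugate of an extended-real-valued function on a
real inner ℝ product space. -/
def EConj {X : Type*} [NormedAddCommGroup X] [InnerProductSpace ℝ X]
    (f : X → EReal) (p : X) : EReal :=
  ⨆ v, ((inner ℝ p v : ℝ) : EReal) - f v


open scoped ENNReal

section AuxLemmas

/-- A lower semicontinuous `EReal`-valued function that is never `⊥` is bounded below
by a real constant on a compact set. -/
lemma lsc_bddBelow_on_compact {X : Type*} [TopologicalSpace X] {f : X → EReal}
    (hf : LowerSemicontinuous f) (hbot : ∀ x, f x ≠ ⊥) {K : Set X} (hK : IsCompact K) :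
    ∃ c : ℝ, ∀ x ∈ K, (c : EReal) ≤ f x := by
  have hex : ∀ x : X, ∃ r : ℝ, (r : EReal) < f x := by
    intro x
    obtain ⟨r, hr1, hr2⟩ := EReal.exists_between_coe_real (bot_lt_iff_ne_bot.2 (hbot x))
    exact ⟨r, hr2⟩
  choose r hr using hex
  have hU : ∀ x : X, IsOpen {z | (r x : EReal) < f z} := by
    intro x
    exact lowerSemicontinuous_iff_isOpen_preimage.1 hf (r x)
  obtain ⟨t, -, hcov⟩ := hK.elim_nhds_subcover (fun x => {z | (r x : EReal) < f z})
    (fun x _ => (hU x).mem_nhds (hr x))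
  rcases t.eq_empty_or_nonempty with rfl | hne
  · refine ⟨0, fun x hx => ?_⟩
    simpa using hcov hx
  · refine ⟨t.inf' hne r, fun x hx => ?_⟩
    obtain ⟨y, hyt, hy⟩ := Set.mem_iUnion₂.1 (hcov hx)
    refine le_trans ?_ hy.le
    exact_mod_cast EReal.coe_le_coe_iff.2 (Finset.inf'_le r hyt)

/-- Weak sequential compactness of bounded sequences in a separable Hilbert space. -/
lemma exists_weak_subseq {H : Type*} [NormedAddCommGroup H] [InnerProductSpace ℝ H]
    [CompleteSpace H] [TopologicalSpace.SeparableSpace H]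
    (u : ℕ → H) (R : ℝ) (hR : ∀ i, ‖u i‖ ≤ R) :
    ∃ φ : ℕ → ℕ, StrictMono φ ∧ ∃ l : H, WeakTendsto (fun k => u (φ k)) l := by
  haveI : Nonempty H := ⟨0⟩
  set d : ℕ → H := TopologicalSpace.denseSeq H with hd
  have hdense : DenseRange d := TopologicalSpace.denseRange_denseSeq H
  have hR0 : 0 ≤ R := le_trans (norm_nonneg _) (hR 0)
  set s : Set (ℕ → ℝ) := Set.pi univ (fun n => Icc (-(R * ‖d n‖)) (R * ‖d n‖)) with hs
  have hscomp : IsCompact s := isCompact_univ_pi (fun n => isCompact_Icc)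
  have hmem : ∀ i, (fun n => (inner ℝ (u i) (d n) : ℝ)) ∈ s := by
    intro i n _
    have h1 : |(inner ℝ (u i) (d n) : ℝ)| ≤ ‖u i‖ * ‖d n‖ := abs_real_inner_le_norm _ _
    have h2 : ‖u i‖ * ‖d n‖ ≤ R * ‖d n‖ :=
      mul_le_mul_of_nonneg_right (hR i) (norm_nonneg _)
    exact abs_le.1 (h1.trans h2)
  obtain ⟨L, -, φ, hφ, hLtend⟩ := hscomp.tendsto_subseq hmem
  have hLn : ∀ n, Tendsto (fun k => (inner ℝ (u (φ k)) (d n) : ℝ)) atTop (𝓝 (L n)) := by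
    intro n
    exact (tendsto_pi_nhds.1 hLtend) n
  have hcauchy : ∀ w : H, CauchySeq (fun k => (inner ℝ (u (φ k)) w : ℝ)) := by
    intro w
    rw [Metric.cauchySeq_iff]
    intro ε hε
    obtain ⟨n₀, hn₀⟩ := Metric.denseRange_iff.1 hdense w (ε / (4 * (R + 1)))
      (by positivity)
    obtain ⟨N, hN⟩ := Metric.cauchySeq_iff.1 (hLn n₀).cauchySeq (ε / 2) (by positivity)
    refine ⟨N, fun a ha b hb => ?_⟩
    have key : ∀ i, |(inner ℝ (u (φ i)) w : ℝ) - (inner ℝ (u (φ i)) (d n₀) : ℝ)| ≤ ε / 4 := by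
      intro i
      have : (inner ℝ (u (φ i)) w : ℝ) - (inner ℝ (u (φ i)) (d n₀) : ℝ)
          = (inner ℝ (u (φ i)) (w - d n₀) : ℝ) := by rw [inner_sub_right]
      rw [this]
      have h1 : |(inner ℝ (u (φ i)) (w - d n₀) : ℝ)| ≤ ‖u (φ i)‖ * ‖w - d n₀‖ :=
        abs_real_inner_le_norm _ _
      have h2 : ‖w - d n₀‖ ≤ ε / (4 * (R + 1)) := by
        rw [← dist_eq_norm]
        exact hn₀.le
      have h3 : ‖u (φ i)‖ * ‖w - d n₀‖ ≤ R * (ε / (4 * (R + 1))) :=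
        mul_le_mul (hR _) h2 (norm_nonneg _) hR0
      refine h1.trans (h3.trans ?_)
      rw [mul_comm, div_mul_eq_mul_div,
        div_le_div_iff₀ (by positivity) (by norm_num : (0:ℝ) < 4)]
      nlinarith [hε.le, hR0]
    have hd2 : dist ((inner ℝ (u (φ a)) (d n₀) : ℝ)) ((inner ℝ (u (φ b)) (d n₀)) : ℝ) < ε / 2 :=
      hN a ha b hb
    have tri := dist_triangle4 ((inner ℝ (u (φ a)) w : ℝ)) ((inner ℝ (u (φ a)) (d n₀) : ℝ))
      ((inner ℝ (u (φ b)) (d n₀) : ℝ)) ((inner ℝ (u (φ b)) w : ℝ))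
    simp only [Real.dist_eq] at tri hd2 ⊢
    have k1 := key a
    have k3 := key b
    rw [abs_sub_comm] at k3
    linarith
  have hlim : ∀ w : H, ∃ a : ℝ, Tendsto (fun k => (inner ℝ (u (φ k)) w : ℝ)) atTop (𝓝 a) :=
    fun w => cauchySeq_tendsto_of_complete (hcauchy w)
  choose f hf using hlim
  have hadd : ∀ w w', f (w + w') = f w + f w' := by
    intro w w'
    refine tendsto_nhds_unique (hf (w + w')) ?_
    have heq : (fun k => (inner ℝ (u (φ k)) (w + w') : ℝ))
        = fun k => (inner ℝ (u (φ k)) w : ℝ) + (inner ℝ (u (φ k)) w' : ℝ) := by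
      funext k; rw [inner_add_right]
    rw [heq]
    exact (hf w).add (hf w')
  have hsmul : ∀ (a : ℝ) (w : H), f (a • w) = a * f w := by
    intro a w
    refine tendsto_nhds_unique (hf (a • w)) ?_
    have heq : (fun k => (inner ℝ (u (φ k)) (a • w) : ℝ))
        = fun k => a * (inner ℝ (u (φ k)) w : ℝ) := by
      funext k; rw [real_inner_smul_right]
    rw [heq]
    exact (hf w).const_mul a
  have hbound : ∀ w : H, ‖f w‖ ≤ R * ‖w‖ := by
    intro w
    have h1 : Tendsto (fun k => |(inner ℝ (u (φ k)) w : ℝ)|) atTop (𝓝 |f w|) := (hf w).abs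
    refine le_of_tendsto h1 (Filter.Eventually.of_forall fun k => ?_)
    exact (abs_real_inner_le_norm _ _).trans
      (mul_le_mul_of_nonneg_right (hR _) (norm_nonneg _))
  let Flin : H →ₗ[ℝ] ℝ :=
    { toFun := f, map_add' := hadd, map_smul' := hsmul }
  let Fcont : H →L[ℝ] ℝ := Flin.mkContinuous R hbound
  let l : H := (InnerProductSpace.toDual ℝ H).symm Fcont
  refine ⟨φ, hφ, l, fun w => ?_⟩
  have hl : (inner ℝ l w : ℝ) = Fcont w := InnerProductSpace.toDual_symm_apply
  rw [hl]
  exact hf w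

/-- Mazur: a weak limit lies in the closed convex hull of every tail. -/
lemma mem_closure_convexHull_tail {H : Type*} [NormedAddCommGroup H] [InnerProductSpace ℝ H]
    [CompleteSpace H] {uu : ℕ → H} {v : H} (huu : WeakTendsto uu v) (j : ℕ) :
    v ∈ closure (convexHull ℝ (uu '' Ici j)) := by
  by_contra hv
  obtain ⟨F, s, hFs, hsv⟩ := geometric_hahn_banach_closed_point
    ((convex_convexHull ℝ _).closure) isClosed_closure hv
  set rf : H := (InnerProductSpace.toDual ℝ H).symm F with hrf
  have hFw : ∀ w : H, F w = (inner ℝ w rf : ℝ) := by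
    intro w
    rw [real_inner_comm]
    exact (InnerProductSpace.toDual_symm_apply).symm
  have htend : Tendsto (fun i => F (uu i)) atTop (𝓝 (F v)) := by
    simp only [hFw]
    exact huu rf
  have hlt : ∀ᶠ i in atTop, F (uu i) ≤ s := by
    filter_upwards [eventually_ge_atTop j] with i hi
    exact (hFs _ (subset_closure (subset_convexHull ℝ _ ⟨i, hi, rfl⟩))).le
  have : F v ≤ s := le_of_tendsto htend hlt
  exact absurd hsv (not_lt.2 this)

/-- coeFn of a finite sum in Lp. -/
lemma Lp_coeFn_finset_sum {α : Type*} [MeasurableSpace α] {μ : MeasureTheory.Measure α}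
    {E : Type*} [NormedAddCommGroup E] {p : ℝ≥0∞} [Fact (1 ≤ p)]
    {ι : Type*} (t : Finset ι) (f : ι → MeasureTheory.Lp E p μ) :
    ⇑(∑ i ∈ t, f i) =ᵐ[μ] fun x => ∑ i ∈ t, f i x := by
  classical
  induction t using Finset.induction_on with
  | empty => simp only [Finset.sum_empty]; exact MeasureTheory.Lp.coeFn_zero E p μ
  | insert a t' hnot ih =>
    rw [Finset.sum_insert hnot]
    filter_upwards [MeasureTheory.Lp.coeFn_add (f a) (∑ i ∈ t', f i), ih] with x hx1 hx2
    simp only [Finset.sum_insert hnot, hx1, Pi.add_apply, hx2]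

end AuxLemmas

set_option maxHeartbeats 2000000 in
set_option synthInstance.maxHeartbeats 400000 in
/-- stability of control and state: if `z_n → z` in `Y` and `S` is
weak-to-weak continuous and compact, then any sequence of minimizers of `E^{z_n}` has a
subsequence converging weakly in `U` to a minimizer `ū` of `E^z`, and along it the states
`S(u_n)` converge strongly in `Y` to `S(ū)`. -/
theorem stability_of_control_and_state
    {n m : ℕ} (hm : 2 ≤ m)
    (Ω : Set (Vec n)) (hΩopen : IsOpen Ω) (hΩbdd : Bornology.IsBounded Ω)
    {Y : Type*} [NormedAddCommGroup Y] [InnerProductSpace ℝ Y] [CompleteSpace Y]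
    (M : Finset (Vec m)) (g : Vec m → EReal)
    (hproper : EProper g) (hconv : EConvexOn g) (hlsc : LowerSemicontinuous g)
    (hdom : {v | g v ≠ ⊤} = convexHull ℝ (M : Set (Vec m)))
    (S : Lp (Vec m) 2 (volume.restrict Ω) → Y)
    -- weak-to-weak continuity
    (hS : ∀ (u : ℕ → Lp (Vec m) 2 (volume.restrict Ω)) (l : Lp (Vec m) 2 (volume.restrict Ω)),
      WeakTendsto u l → WeakTendsto (fun i => S (u i)) (S l))
    -- compactness: weakly convergent sequences are mapped to strongly convergent ones
    (hScpt : ∀ (u : ℕ → Lp (Vec m) 2 (volume.restrict Ω)) (l : Lp (Vec m) 2 (volume.restrict Ω)),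
      WeakTendsto u l → Tendsto (fun i => ‖S (u i) - S l‖) atTop (nhds (0:ℝ)))
    (z : ℕ → Y) (zbar : Y) (hz : Tendsto (fun i => ‖z i - zbar‖) atTop (nhds (0:ℝ)))
    (u : ℕ → Lp (Vec m) 2 (volume.restrict Ω))
    (hu : ∀ i, ∀ v, energy (volume.restrict Ω) S (z i) g (u i) ≤
      energy (volume.restrict Ω) S (z i) g v) :
    ∃ φ : ℕ → ℕ, StrictMono φ ∧ ∃ ubar : Lp (Vec m) 2 (volume.restrict Ω),
      (∀ v, energy (volume.restrict Ω) S zbar g ubar ≤ energy (volume.restrict Ω) S zbar g v) ∧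
      WeakTendsto (fun k => u (φ k)) ubar ∧
      Tendsto (fun k => ‖S (u (φ k)) - S ubar‖) atTop (nhds (0:ℝ)) := by
  classical
  haveI : IsFiniteMeasure (volume.restrict Ω : Measure (Vec n)) := by
    constructor
    rw [Measure.restrict_apply_univ]
    exact lt_of_le_of_lt (measure_mono subset_closure) hΩbdd.isCompact_closure.measure_lt_top
  haveI : Fact ((2:ℝ≥0∞) ≠ ∞) := ⟨by norm_num⟩
  haveI : SecondCountableTopology (Lp (Vec m) 2 (volume.restrict Ω : Measure (Vec n))) :=
    MeasureTheory.Lp.SecondCountableTopology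
  haveI : TopologicalSpace.SeparableSpace (Lp (Vec m) 2 (volume.restrict Ω : Measure (Vec n))) :=
    TopologicalSpace.SecondCountableTopology.to_separableSpace
  set D : Set (Vec m) := convexHull ℝ (M : Set (Vec m)) with hD
  have hmemD : ∀ v : Vec m, g v ≠ ⊤ ↔ v ∈ D := by
    intro v
    have h := Set.ext_iff.1 hdom v
    simpa using h
  have hDconv : Convex ℝ D := convex_convexHull ℝ _
  have hDcomp : IsCompact D := M.finite_toSet.isCompact_convexHull ℝ
  have hDclosed : IsClosed D := hDcomp.isClosed
  have hDne : D.Nonempty := by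
    obtain ⟨v₀, hv₀⟩ := hproper.1
    exact ⟨v₀, (hmemD v₀).1 hv₀⟩
  obtain ⟨R, hR⟩ := isBounded_iff_forall_norm_le.1 hDcomp.isBounded
  have hR0 : 0 ≤ R := le_trans (norm_nonneg _) (hR _ hDne.choose_spec)
  obtain ⟨c, hc⟩ := lsc_bddBelow_on_compact hlsc hproper.2 hDcomp
  set gt : Vec m → ℝ := fun v => (g v).toReal with hgt
  have hgt_meas : Measurable gt := measurable_ereal_toReal.comp hlsc.measurable
  have hg_coe : ∀ v ∈ D, (gt v : EReal) = g v := fun v hv =>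
    EReal.coe_toReal ((hmemD v).2 hv) (hproper.2 v)
  have hc' : ∀ v ∈ D, c ≤ gt v := by
    intro v hv
    have h1 := hc v hv
    rw [← hg_coe v hv] at h1
    exact_mod_cast h1
  have hMne : M.Nonempty := by
    by_contra h
    rw [Finset.not_nonempty_iff_eq_empty] at h
    obtain ⟨v, hv⟩ := hDne
    rw [hD, h] at hv
    simp at hv
  have hgt_convexOn : ConvexOn ℝ D gt := by
    refine ⟨hDconv, fun x hx y hy a b ha hb hab => ?_⟩
    have hz2 : a • x + b • y ∈ D := hDconv hx hy ha hb hab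
    have h := hconv x y a b ha hb hab
    rw [← hg_coe x hx, ← hg_coe y hy, ← hg_coe _ hz2,
      ← EReal.coe_mul, ← EReal.coe_mul, ← EReal.coe_add] at h
    exact_mod_cast h
  set C : ℝ := M.sup' hMne gt with hCdef
  have hC' : ∀ v ∈ D, gt v ≤ C := by
    intro v hv
    obtain ⟨y, hy, hvy⟩ := hgt_convexOn.exists_ge_of_mem_convexHull
      (subset_convexHull ℝ (M : Set (Vec m))) (by rw [← hD]; exact hv)
    exact hvy.trans (Finset.le_sup' gt hy)
  -- integrability of the integrand for controls with values in D
  have hKint : ∀ w : Lp (Vec m) 2 (volume.restrict Ω), (∀ᵐ x ∂(volume.restrict Ω), w x ∈ D) →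
      Integrable (fun x => gt (w x)) (volume.restrict Ω) := by
    intro w hw
    have hmeas : AEStronglyMeasurable (fun x => gt (w x)) (volume.restrict Ω) :=
      (hgt_meas.comp_aemeasurable (Lp.aestronglyMeasurable w).aemeasurable).aestronglyMeasurable
    refine Integrable.mono' (integrable_const (max |c| |C|)) hmeas ?_
    filter_upwards [hw] with x hx
    rw [Real.norm_eq_abs, abs_le]
    have h1 := hc' _ hx
    have h2 := hC' _ hx
    have h3 := le_max_left |c| |C|
    have h4 := le_max_right |c| |C|
    have h5 := neg_abs_le c
    have h6 := le_abs_self C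
    constructor <;> linarith
  have h_intG_eq : ∀ w : Lp (Vec m) 2 (volume.restrict Ω), (∀ᵐ x ∂(volume.restrict Ω), w x ∈ D) →
      intG (volume.restrict Ω) g (fun x => w x) = ((∫ x, gt (w x) ∂(volume.restrict Ω) : ℝ) : EReal) := by
    intro w hw
    rw [intG, if_pos]
    constructor
    · filter_upwards [hw] with x hx
      exact (hmemD _).2 hx
    · exact hKint w hw
  have h_mem_of_ne_top : ∀ w : Lp (Vec m) 2 (volume.restrict Ω), intG (volume.restrict Ω) g (fun x => w x) ≠ ⊤ →
      (∀ᵐ x ∂(volume.restrict Ω), w x ∈ D) := by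
    intro w hw
    rw [intG] at hw
    split_ifs at hw with hcond
    · filter_upwards [hcond.1] with x hx
      exact (hmemD _).1 hx
    · exact absurd rfl hw
  have h_energy_eq : ∀ (zz : Y) (w : Lp (Vec m) 2 (volume.restrict Ω)), (∀ᵐ x ∂(volume.restrict Ω), w x ∈ D) →
      energy (volume.restrict Ω) S zz g w = (((1/2 : ℝ) * ‖S w - zz‖^2 + ∫ x, gt (w x) ∂(volume.restrict Ω) : ℝ) : EReal) := by
    intro zz w hw
    rw [energy, h_intG_eq w hw, ← EReal.coe_add]
  have hIlb : ∀ w : Lp (Vec m) 2 (volume.restrict Ω), (∀ᵐ x ∂(volume.restrict Ω), w x ∈ D) →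
      c * ((volume.restrict Ω) univ).toReal ≤ ∫ x, gt (w x) ∂(volume.restrict Ω) := by
    intro w hw
    have h1 : ∫ x, (c : ℝ) ∂(volume.restrict Ω) ≤ ∫ x, gt (w x) ∂(volume.restrict Ω) :=
      integral_mono_ae (integrable_const c) (hKint w hw)
        (by filter_upwards [hw] with x hx; exact hc' _ hx)
    rwa [integral_const, smul_eq_mul, mul_comm] at h1
  have hIub : ∀ w : Lp (Vec m) 2 (volume.restrict Ω), (∀ᵐ x ∂(volume.restrict Ω), w x ∈ D) →
      (∫ x, gt (w x) ∂(volume.restrict Ω)) ≤ C * ((volume.restrict Ω) univ).toReal := by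
    intro w hw
    have h1 : ∫ x, gt (w x) ∂(volume.restrict Ω) ≤ ∫ x, (C : ℝ) ∂(volume.restrict Ω) :=
      integral_mono_ae (hKint w hw) (integrable_const C)
        (by filter_upwards [hw] with x hx; exact hC' _ hx)
    rwa [integral_const, smul_eq_mul, mul_comm] at h1
  -- all minimizers take values in D a.e.
  obtain ⟨v₀, hv₀D⟩ := hDne
  have hw₀ : ∀ᵐ x ∂(volume.restrict Ω), (Lp.const 2 (volume.restrict Ω) v₀ : Lp (Vec m) 2 (volume.restrict Ω)) x ∈ D := by
    filter_upwards [Lp.coeFn_const 2 (volume.restrict Ω) v₀] with x hx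
    rw [hx]
    exact hv₀D
  have hfinite : ∀ i, ∀ᵐ x ∂(volume.restrict Ω), u i x ∈ D := by
    intro i
    apply h_mem_of_ne_top
    intro htop
    have h1 := hu i (Lp.const 2 (volume.restrict Ω) v₀)
    rw [h_energy_eq _ _ hw₀] at h1
    have h2 : energy (volume.restrict Ω) S (z i) g (u i) = ⊤ := by
      rw [energy, htop]
      exact EReal.coe_add_top _
    rw [h2] at h1
    exact absurd h1 (not_le.2 (EReal.coe_lt_top _))
  -- uniform norm bound and weak subsequence
  have hub : ∀ i, ‖u i‖ ≤ (measureUnivNNReal (volume.restrict Ω) : ℝ) ^ (2 : ℝ≥0∞).toReal⁻¹ * R := by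
    intro i
    refine Lp.norm_le_of_ae_bound hR0 ?_
    filter_upwards [hfinite i] with x hx
    exact hR _ hx
  obtain ⟨φ, hφ, l, hweak⟩ := exists_weak_subseq u _ hub
  -- extract convergence of the integrals
  have hIbdd : ∀ k, (∫ x, gt ((u (φ k)) x) ∂(volume.restrict Ω)) ∈
      Icc (c * ((volume.restrict Ω) univ).toReal) (C * ((volume.restrict Ω) univ).toReal) :=
    fun k => ⟨hIlb _ (hfinite _), hIub _ (hfinite _)⟩
  obtain ⟨a, -, φ₂, hφ₂, hIa⟩ := isCompact_Icc.tendsto_subseq hIbdd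
  refine ⟨φ ∘ φ₂, hφ.comp hφ₂, l, ?_⟩
  have hweakψ : WeakTendsto (fun k => u ((φ ∘ φ₂) k)) l :=
    fun w => (hweak w).comp hφ₂.tendsto_atTop
  have hIa' : Tendsto (fun k => ∫ x, gt ((u ((φ ∘ φ₂) k)) x) ∂(volume.restrict Ω)) atTop (𝓝 a) := hIa
  -- the key lower-semicontinuity fact via Mazur's lemma + convexity + Fatou
  -- first : the convex-hull bound
  have hhull : ∀ (b : ℝ) (T : Set (Lp (Vec m) 2 (volume.restrict Ω))),
      (∀ t ∈ T, (∀ᵐ x ∂(volume.restrict Ω), t x ∈ D) ∧ (∫ x, gt (t x) ∂(volume.restrict Ω)) ≤ b) →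
      ∀ w ∈ convexHull ℝ T, (∀ᵐ x ∂(volume.restrict Ω), w x ∈ D) ∧ (∫ x, gt (w x) ∂(volume.restrict Ω)) ≤ b := by
    intro b T hT w hw
    rw [convexHull_eq] at hw
    obtain ⟨ι, t, wt, zf, h0, h1, hmem, hwx⟩ := hw
    have hwsum : w = ∑ i ∈ t, wt i • zf i := by
      rw [← hwx, Finset.centerMass_eq_of_sum_1 _ _ h1]
    have hae : ∀ᵐ x ∂(volume.restrict Ω), w x = ∑ i ∈ t, wt i • zf i x := by
      have h2 : ⇑w =ᵐ[(volume.restrict Ω)] fun x => ∑ i ∈ t, (wt i • zf i : Lp (Vec m) 2 (volume.restrict Ω)) x := by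
        rw [hwsum]
        exact Lp_coeFn_finset_sum t _
      have h3 : ∀ᵐ x ∂(volume.restrict Ω), ∀ i ∈ (t : Set ι), (wt i • zf i : Lp (Vec m) 2 (volume.restrict Ω)) x = wt i • zf i x := by
        rw [ae_ball_iff t.countable_toSet]
        intro i _
        filter_upwards [Lp.coeFn_smul (wt i) (zf i)] with x hx
        rw [hx]
        rfl
      filter_upwards [h2, h3] with x hx2 hx3
      rw [hx2]
      exact Finset.sum_congr rfl fun i hi => hx3 i hi
    have hmemae : ∀ᵐ x ∂(volume.restrict Ω), ∀ i ∈ (t : Set ι), zf i x ∈ D := by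
      rw [ae_ball_iff t.countable_toSet]
      intro i hi
      exact (hT _ (hmem i hi)).1
    have hKw : ∀ᵐ x ∂(volume.restrict Ω), w x ∈ D := by
      filter_upwards [hae, hmemae] with x h1x h2x
      rw [h1x]
      exact hDconv.sum_mem h0 h1 (fun i hi => h2x i hi)
    refine ⟨hKw, ?_⟩
    have hpt : ∀ᵐ x ∂(volume.restrict Ω), gt (w x) ≤ ∑ i ∈ t, wt i * gt (zf i x) := by
      filter_upwards [hae, hmemae] with x h1x h2x
      rw [h1x]
      exact hgt_convexOn.map_sum_le h0 h1 (fun i hi => h2x i hi)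
    have hint_each : ∀ i ∈ t, Integrable (fun x => wt i * gt (zf i x)) (volume.restrict Ω) :=
      fun i hi => (hKint _ (hT _ (hmem i hi)).1).const_mul _
    have hint_sum : Integrable (fun x => ∑ i ∈ t, wt i * gt (zf i x)) (volume.restrict Ω) :=
      integrable_finset_sum t hint_each
    have h5 : (∫ x, gt (w x) ∂(volume.restrict Ω)) ≤ ∫ x, ∑ i ∈ t, wt i * gt (zf i x) ∂(volume.restrict Ω) :=
      integral_mono_ae (hKint w hKw) hint_sum hpt
    rw [integral_finset_sum t hint_each] at h5
    refine h5.trans ?_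
    calc ∑ i ∈ t, ∫ x, wt i * gt (zf i x) ∂(volume.restrict Ω)
        = ∑ i ∈ t, wt i * ∫ x, gt (zf i x) ∂(volume.restrict Ω) := by
          exact Finset.sum_congr rfl fun i hi => integral_const_mul _ _
      _ ≤ ∑ i ∈ t, wt i * b := by
          refine Finset.sum_le_sum fun i hi => ?_
          exact mul_le_mul_of_nonneg_left (hT _ (hmem i hi)).2 (h0 i hi)
      _ = b := by rw [← Finset.sum_mul, h1, one_mul]
  -- second : closure bound (strong lower semicontinuity via Fatou)
  have hclosure : ∀ (b : ℝ) (A : Set (Lp (Vec m) 2 (volume.restrict Ω))),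
      (∀ t ∈ A, (∀ᵐ x ∂(volume.restrict Ω), t x ∈ D) ∧ (∫ x, gt (t x) ∂(volume.restrict Ω)) ≤ b) →
      ∀ v ∈ closure A, (∀ᵐ x ∂(volume.restrict Ω), v x ∈ D) ∧ (∫ x, gt (v x) ∂(volume.restrict Ω)) ≤ b := by
    intro b A hA v hv
    obtain ⟨wj, hwjA, hwjv⟩ := mem_closure_iff_seq_limit.1 hv
    have hmeasconv : TendstoInMeasure (volume.restrict Ω) (fun j => ⇑(wj j)) atTop ⇑v := by
      apply tendstoInMeasure_of_tendsto_eLpNorm (p := 2) (by norm_num)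
        (fun j => Lp.aestronglyMeasurable _) (Lp.aestronglyMeasurable _)
      have h1 : ∀ j, eLpNorm (⇑(wj j) - ⇑v) 2 (volume.restrict Ω) = ENNReal.ofReal ‖wj j - v‖ := by
        intro j
        rw [← eLpNorm_congr_ae (Lp.coeFn_sub (wj j) v), Lp.norm_def,
          ENNReal.ofReal_toReal (Lp.eLpNorm_ne_top _)]
      simp only [h1]
      have h2 : Tendsto (fun j => ‖wj j - v‖) atTop (𝓝 0) :=
        tendsto_iff_norm_sub_tendsto_zero.1 hwjv
      have h3 := ENNReal.tendsto_ofReal h2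
      rwa [ENNReal.ofReal_zero] at h3
    obtain ⟨ns, -, hns⟩ := hmeasconv.exists_seq_tendsto_ae
    have haeD : ∀ᵐ x ∂(volume.restrict Ω), ∀ j : ℕ, (wj (ns j)) x ∈ D :=
      ae_all_iff.2 fun j => (hA _ (hwjA _)).1
    have haemem : ∀ᵐ x ∂(volume.restrict Ω), v x ∈ D := by
      filter_upwards [hns, haeD] with x hx hDx
      exact hDclosed.mem_of_tendsto hx (Filter.Eventually.of_forall fun j => hDx j)
    refine ⟨haemem, ?_⟩
    have hpt : ∀ᵐ x ∂(volume.restrict Ω), ENNReal.ofReal (gt (v x) - c)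
        ≤ liminf (fun j => ENNReal.ofReal (gt ((wj (ns j)) x) - c)) atTop := by
      filter_upwards [hns, haeD, haemem] with x hx hDx hvx
      rw [le_liminf_iff]
      intro y hy
      have hytop : y ≠ ⊤ := (hy.trans ENNReal.ofReal_lt_top).ne
      have hy' : y.toReal < gt (v x) - c := (ENNReal.lt_ofReal_iff_toReal_lt hytop).1 hy
      have hlt : ((y.toReal + c : ℝ) : EReal) < g (v x) := by
        rw [← hg_coe _ hvx]
        exact_mod_cast (by linarith : y.toReal + c < gt (v x))
      have hev := hx.eventually (hlsc (v x) _ hlt)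
      filter_upwards [hev] with j hj
      have hjD := hDx j
      rw [← hg_coe _ hjD] at hj
      have hj' : y.toReal + c < gt ((wj (ns j)) x) := by exact_mod_cast hj
      exact (ENNReal.lt_ofReal_iff_toReal_lt hytop).2 (by linarith)
    have hmeas_j : ∀ j, AEMeasurable (fun x => ENNReal.ofReal (gt ((wj (ns j)) x) - c)) (volume.restrict Ω) := by
      intro j
      exact ENNReal.measurable_ofReal.comp_aemeasurable
        (((hgt_meas.comp_aemeasurable
          (Lp.aestronglyMeasurable (wj (ns j))).aemeasurable)).sub aemeasurable_const)
    have hle1 : ∫⁻ x, ENNReal.ofReal (gt (v x) - c) ∂(volume.restrict Ω)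
        ≤ liminf (fun j => ∫⁻ x, ENNReal.ofReal (gt ((wj (ns j)) x) - c) ∂(volume.restrict Ω)) atTop :=
      le_trans (lintegral_mono_ae hpt) (lintegral_liminf_le' hmeas_j)
    have hcb : c * ((volume.restrict Ω) univ).toReal ≤ b :=
      le_trans (hIlb _ (hA _ (hwjA 0)).1) (hA _ (hwjA 0)).2
    have heq1 : ∀ w : Lp (Vec m) 2 (volume.restrict Ω), (∀ᵐ x ∂(volume.restrict Ω), w x ∈ D) →
        ∫⁻ x, ENNReal.ofReal (gt (w x) - c) ∂(volume.restrict Ω)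
          = ENNReal.ofReal ((∫ x, gt (w x) ∂(volume.restrict Ω)) - c * ((volume.restrict Ω) univ).toReal) := by
      intro w hw
      have hint : Integrable (fun x => gt (w x) - c) (volume.restrict Ω) :=
        (hKint w hw).sub (integrable_const c)
      have hnn : 0 ≤ᵐ[(volume.restrict Ω : Measure (Vec n))] fun x => gt (w x) - c := by
        filter_upwards [hw] with x hx
        simp only [Pi.zero_apply]
        linarith [hc' _ hx]
      rw [← ofReal_integral_eq_lintegral_ofReal hint hnn]
      congr 1
      rw [integral_sub (hKint w hw) (integrable_const c), integral_const, smul_eq_mul, mul_comm]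
      rfl
    rw [heq1 v haemem] at hle1
    have hub2 : liminf (fun j => ∫⁻ x, ENNReal.ofReal (gt ((wj (ns j)) x) - c) ∂(volume.restrict Ω)) atTop
        ≤ ENNReal.ofReal (b - c * ((volume.restrict Ω) univ).toReal) := by
      have hterm : ∀ j, (∫⁻ x, ENNReal.ofReal (gt ((wj (ns j)) x) - c) ∂(volume.restrict Ω))
          ≤ ENNReal.ofReal (b - c * ((volume.restrict Ω) univ).toReal) := by
        intro j
        rw [heq1 _ (hA _ (hwjA _)).1]
        exact ENNReal.ofReal_le_ofReal (by linarith [(hA _ (hwjA (ns j))).2])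
      calc liminf (fun j => ∫⁻ x, ENNReal.ofReal (gt ((wj (ns j)) x) - c) ∂(volume.restrict Ω)) atTop
          ≤ liminf (fun _ : ℕ => ENNReal.ofReal (b - c * ((volume.restrict Ω) univ).toReal)) atTop :=
            liminf_le_liminf (Filter.Eventually.of_forall hterm)
        _ = ENNReal.ofReal (b - c * ((volume.restrict Ω) univ).toReal) := liminf_const _
    have hfin := (ENNReal.ofReal_le_ofReal_iff (by linarith)).1 (hle1.trans hub2)
    linarith
  -- apply Mazur + the two bounds
  have hKla : ∀ ε : ℝ, 0 < ε →
      (∀ᵐ x ∂(volume.restrict Ω), l x ∈ D) ∧ (∫ x, gt (l x) ∂(volume.restrict Ω)) ≤ a + ε := by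
    intro ε hε
    have hev : ∀ᶠ k in atTop, (∫ x, gt ((u ((φ ∘ φ₂) k)) x) ∂(volume.restrict Ω)) < a + ε :=
      hIa'.eventually_lt_const (by linarith)
    obtain ⟨j, hj⟩ := eventually_atTop.1 hev
    have hmaz := mem_closure_convexHull_tail hweakψ j
    have hT : ∀ t ∈ (fun k => u ((φ ∘ φ₂) k)) '' Ici j,
        (∀ᵐ x ∂(volume.restrict Ω), t x ∈ D) ∧ (∫ x, gt (t x) ∂(volume.restrict Ω)) ≤ a + ε := by
      rintro t ⟨k, hk, rfl⟩
      exact ⟨hfinite _, (hj k hk).le⟩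
    exact hclosure (a + ε) _ (fun t ht => hhull (a + ε) _ hT t ht) l hmaz
  have hKl : ∀ᵐ x ∂(volume.restrict Ω), l x ∈ D := (hKla 1 one_pos).1
  have hIl : (∫ x, gt (l x) ∂(volume.restrict Ω)) ≤ a := by
    by_contra h
    push_neg at h
    have := (hKla (((∫ x, gt (l x) ∂(volume.restrict Ω)) - a) / 2) (by linarith)).2
    linarith
  -- limits of the data
  have hz' : Tendsto (fun k => ‖z ((φ ∘ φ₂) k) - zbar‖) atTop (𝓝 0) :=
    hz.comp (hφ.comp hφ₂).tendsto_atTop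
  have hSconv : Tendsto (fun k => ‖S (u ((φ ∘ φ₂) k)) - S l‖) atTop (𝓝 0) := hScpt _ _ hweakψ
  have hnorm : Tendsto (fun k => ‖S (u ((φ ∘ φ₂) k)) - z ((φ ∘ φ₂) k)‖) atTop
      (𝓝 ‖S l - zbar‖) := by
    have h1 : Tendsto (fun k => S (u ((φ ∘ φ₂) k)) - z ((φ ∘ φ₂) k)) atTop (𝓝 (S l - zbar)) := by
      have hb : ∀ k, ‖S (u ((φ ∘ φ₂) k)) - z ((φ ∘ φ₂) k) - (S l - zbar)‖
          ≤ ‖S (u ((φ ∘ φ₂) k)) - S l‖ + ‖z ((φ ∘ φ₂) k) - zbar‖ := by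
        intro k
        have heq : S (u ((φ ∘ φ₂) k)) - z ((φ ∘ φ₂) k) - (S l - zbar)
            = (S (u ((φ ∘ φ₂) k)) - S l) - (z ((φ ∘ φ₂) k) - zbar) := by abel
        rw [heq]
        exact norm_sub_le _ _
      have h0 : Tendsto (fun k => S (u ((φ ∘ φ₂) k)) - z ((φ ∘ φ₂) k) - (S l - zbar))
          atTop (𝓝 0) := squeeze_zero_norm hb (by simpa using hSconv.add hz')
      exact tendsto_iff_norm_sub_tendsto_zero.2 (by simpa using h0.norm)
    exact h1.norm
  refine ⟨?_, hweakψ, hSconv⟩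
  -- minimality
  intro v
  by_cases hv : intG (volume.restrict Ω) g (fun x => v x) = ⊤
  · have h1 : energy (volume.restrict Ω) S zbar g v = ⊤ := by
      rw [energy, hv]
      exact EReal.coe_add_top _
    rw [h1]
    exact le_top
  · have hvD : ∀ᵐ x ∂(volume.restrict Ω), v x ∈ D := h_mem_of_ne_top v hv
    rw [h_energy_eq zbar l hKl, h_energy_eq zbar v hvD, EReal.coe_le_coe_iff]
    have hseq : ∀ k, (1/2 : ℝ) * ‖S (u ((φ ∘ φ₂) k)) - z ((φ ∘ φ₂) k)‖^2
          + ∫ x, gt ((u ((φ ∘ φ₂) k)) x) ∂(volume.restrict Ω)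
        ≤ (1/2 : ℝ) * ‖S v - z ((φ ∘ φ₂) k)‖^2 + ∫ x, gt (v x) ∂(volume.restrict Ω) := by
      intro k
      have h1 := hu ((φ ∘ φ₂) k) v
      rw [h_energy_eq _ _ (hfinite ((φ ∘ φ₂) k)), h_energy_eq _ _ hvD,
        EReal.coe_le_coe_iff] at h1
      exact h1
    have hL : Tendsto (fun k => (1/2 : ℝ) * ‖S (u ((φ ∘ φ₂) k)) - z ((φ ∘ φ₂) k)‖^2
          + ∫ x, gt ((u ((φ ∘ φ₂) k)) x) ∂(volume.restrict Ω)) atTop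
        (𝓝 ((1/2 : ℝ) * ‖S l - zbar‖^2 + a)) :=
      (((hnorm.pow 2).const_mul _)).add hIa'
    have hz'' : Tendsto (fun k => z ((φ ∘ φ₂) k)) atTop (𝓝 zbar) :=
      tendsto_iff_norm_sub_tendsto_zero.2 hz'
    have hRt : Tendsto (fun k => (1/2 : ℝ) * ‖S v - z ((φ ∘ φ₂) k)‖^2 + ∫ x, gt (v x) ∂(volume.restrict Ω))
        atTop (𝓝 ((1/2 : ℝ) * ‖S v - zbar‖^2 + ∫ x, gt (v x) ∂(volume.restrict Ω))) :=
      ((((tendsto_const_nhds.sub hz'').norm.pow 2).const_mul _)).add tendsto_const_nhds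
    have hfinal := le_of_tendsto_of_tendsto' hL hRt hseq
    nlinarith [hIl]
end
end

section
/- Under the hypotheses of the dual stability result (z_n → z in Y; S weak-to-weak continuous, Fréchet differentiable, compact; adjoint convergence in V* with V* ↪ L^∞(Ω;ℝᵐ)), let Q ⊂ ℝᵐ be the set on which ∂g* is single-valued, and for P ⊂ ℝᵐ set Ω_P = {x ∈ Ω : p̄(x) ∈ P}. Let u_n be minimizers of E^{z_n} with dual variables p_n → p̄ in V*, and ū the corresponding limit minimizer of E^z. Then: (i) for any compact P ⊂⊂ Q and all n large enough, u_n(x) = ū(x) ∈ M for a.e. x ∈ Ω_P; (ii) u_n restricted to Ω_Q converges strongly in L²(Ω_Q;ℝᵐ) to ū restricted to Ω_Q, and ū(x) ∈ M for a.e. x ∈ Ω_Q. -/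
open MeasureTheory Set Filter Topology

noncomputable section

section Core

variable {m : ℕ} (M : Finset (Vec m)) (g : Vec m → EReal)

lemma real_of_ne (x : EReal) (h1 : x ≠ ⊤) (h2 : x ≠ ⊥) : ∃ r : ℝ, x = (r : EReal) :=
  ⟨x.toReal, (EReal.coe_toReal h1 h2).symm⟩

lemma exists_glb (hbot : ∀ v, g v ≠ ⊥) (hlsc : LowerSemicontinuous g) :
    ∃ c : ℝ, ∀ v ∈ convexHull ℝ (M : Set (Vec m)), (c : EReal) ≤ g v := by
  by_contra h
  push_neg at h
  have h' : ∀ k : ℕ, ∃ v, v ∈ convexHull ℝ (M : Set (Vec m)) ∧ g v < ((-(k:ℝ) : ℝ) : EReal) := by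
    intro k
    obtain ⟨v, hv1, hv2⟩ := h (-(k:ℝ))
    exact ⟨v, hv1, hv2⟩
  choose v hvK hvlt using h'
  have hK : IsCompact (convexHull ℝ (M : Set (Vec m))) := M.finite_toSet.isCompact_convexHull ℝ
  obtain ⟨v0, hv0K, φ, hφ, hconv⟩ := hK.tendsto_subseq hvK
  have hbot0 : (⊥ : EReal) < g v0 := Ne.bot_lt (hbot v0)
  obtain ⟨y, hy1, hy2⟩ := exists_between hbot0
  have hyt : y ≠ ⊤ := by
    intro h; rw [h] at hy2; exact absurd hy2 (not_lt_of_ge le_top)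
  obtain ⟨yr, hyr⟩ := real_of_ne y hyt (ne_of_gt hy1)
  have hev : ∀ᶠ k in atTop, y < g (v (φ k)) := hconv.eventually (hlsc v0 y hy2)
  obtain ⟨k, hk1, hk2⟩ := (hev.and (eventually_ge_atTop ⌈-yr⌉₊)).exists
  have hφk : (k : ℝ) ≤ (φ k : ℝ) := by exact_mod_cast hφ.le_apply
  have hchain : y < ((-(k:ℝ) : ℝ) : EReal) := lt_trans hk1 <| lt_of_lt_of_le (hvlt (φ k)) <| by
    exact_mod_cast neg_le_neg hφk
  rw [hyr] at hchain
  have : yr < -(k:ℝ) := EReal.coe_lt_coe_iff.mp hchain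
  have : -yr ≤ (k : ℝ) := le_trans (Nat.le_ceil _) (by exact_mod_cast hk2)
  linarith

lemma econj_attain (hproper : EProper g) (hlsc : LowerSemicontinuous g)
    (hdom : {v | g v ≠ ⊤} = convexHull ℝ (M : Set (Vec m))) (q : Vec m) :
    ∃ v ∈ convexHull ℝ (M : Set (Vec m)), ∃ r : ℝ, g v = (r : EReal) ∧
      EConj g q = (((inner ℝ q v : ℝ) - r : ℝ) : EReal) := by
  classical
  set K := convexHull ℝ (M : Set (Vec m)) with hKdef
  have hreal : ∀ v ∈ K, ∃ r : ℝ, g v = (r : EReal) := by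
    intro v hv
    rw [← hdom] at hv
    exact real_of_ne _ hv (hproper.2 v)
  have hoff : ∀ v, v ∉ K → g v = ⊤ := by
    intro v hv
    by_contra h
    have h2 : v ∈ {v | g v ≠ ⊤} := h
    rw [hdom] at h2
    exact hv h2
  obtain ⟨v0, hv0⟩ := hproper.1
  have hv0K : v0 ∈ K := hdom ▸ hv0
  obtain ⟨r0, hr0⟩ := hreal v0 hv0K
  obtain ⟨c, hc⟩ := exists_glb M g hproper.2 hlsc
  have hK : IsCompact K := M.finite_toSet.isCompact_convexHull ℝ
  obtain ⟨R, hR⟩ := isBounded_iff_forall_norm_le.mp hK.isBounded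
  -- terms
  set T : Vec m → EReal := fun v => ((inner ℝ q v : ℝ) : EReal) - g v with hT
  have hTle : ∀ v, T v ≤ ((‖q‖ * R - c : ℝ) : EReal) := by
    intro v
    by_cases hv : v ∈ K
    · obtain ⟨r, hr⟩ := hreal v hv
      have h1 : (inner ℝ q v : ℝ) ≤ ‖q‖ * R := le_trans (real_inner_le_norm q v)
        (by have := hR v hv; have : ‖v‖ ≤ R := this; nlinarith [norm_nonneg q])
      have h2 : c ≤ r := by have := hc v hv; rw [hr] at this; exact_mod_cast this
      simp only [hT, hr, ← EReal.coe_sub]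
      exact_mod_cast by linarith
    · simp [hT, hoff v hv, EReal.sub_top]
  have hTv0 : T v0 = (((inner ℝ q v0 : ℝ) - r0 : ℝ) : EReal) := by
    simp [hT, hr0, ← EReal.coe_sub]
  have hble : EConj g q ≤ ((‖q‖ * R - c : ℝ) : EReal) := iSup_le hTle
  have hbge : (((inner ℝ q v0 : ℝ) - r0 : ℝ) : EReal) ≤ EConj g q := hTv0 ▸ le_iSup T v0
  have hbt : EConj g q ≠ ⊤ := (lt_of_le_of_lt hble (EReal.coe_lt_top _)).ne
  have hbb : EConj g q ≠ ⊥ := (lt_of_lt_of_le (EReal.bot_lt_coe _) hbge).ne'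
  obtain ⟨br, hbr⟩ := real_of_ne _ hbt hbb
  -- choose near-maximizing sequence
  have hseq : ∀ k : ℕ, ∃ v, ((br - 1/(k+1) : ℝ) : EReal) < T v := by
    intro k
    have : ((br - 1/(k+1) : ℝ) : EReal) < EConj g q := by
      rw [hbr]; exact_mod_cast sub_lt_self br (by positivity)
    exact lt_iSup_iff.mp this
  choose v hv using hseq
  have hvK : ∀ k, v k ∈ K := by
    intro k
    by_contra h
    have h1 := hv k
    have h2 : T (v k) = ⊥ := by simp [hT, hoff _ h, EReal.sub_top]
    rw [h2] at h1
    exact absurd h1 (not_lt_of_ge bot_le)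
  obtain ⟨vs, hvsK, φ, hφ, hconv⟩ := hK.tendsto_subseq hvK
  obtain ⟨rs, hrs⟩ := hreal vs hvsK
  have hrk : ∀ k, ∃ r : ℝ, g (v (φ k)) = (r : EReal) := fun k => hreal _ (hvK (φ k))
  choose r hr using hrk
  -- r k < inner ℝ q (v (φ k)) - br + 1/(φ k + 1)
  have hrlt : ∀ k, r k < (inner ℝ q (v (φ k)) : ℝ) - br + 1/(φ k + 1) := by
    intro k
    have := hv (φ k)
    rw [hT] at this
    simp only [hr k, ← EReal.coe_sub] at this
    have := EReal.coe_lt_coe_iff.mp this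
    linarith
  -- limit of RHS
  have hck : Tendsto (fun k => (inner ℝ q (v (φ k)) : ℝ) - br + 1/(φ k + 1)) atTop
      (nhds ((inner ℝ q vs : ℝ) - br)) := by
    have h1 : Tendsto (fun k => (inner ℝ q (v (φ k)) : ℝ)) atTop (nhds (inner ℝ q vs : ℝ)) :=
      ((continuous_const.inner continuous_id).tendsto vs).comp hconv
    have h2 : Tendsto (fun k : ℕ => 1/((φ k : ℝ) + 1)) atTop (nhds 0) := by
      apply Tendsto.comp tendsto_one_div_add_atTop_nhds_zero_nat ?_ |>.congr (fun k => rfl)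
      exact hφ.tendsto_atTop
    have := (h1.sub_const br).add h2
    simpa using this
  -- lower semicontinuity bound
  have hlow : ∀ ε : ℝ, 0 < ε → rs - ε ≤ (inner ℝ q vs : ℝ) - br := by
    intro ε hε
    have h1 : ((rs - ε : ℝ) : EReal) < g vs := by
      rw [hrs]; exact_mod_cast sub_lt_self rs hε
    have hev : ∀ᶠ k in atTop, ((rs - ε : ℝ) : EReal) < g (v (φ k)) :=
      hconv.eventually (hlsc vs _ h1)
    have hev2 : ∀ᶠ k in atTop, rs - ε ≤ (inner ℝ q (v (φ k)) : ℝ) - br + 1/(φ k + 1) := by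
      filter_upwards [hev] with k hk
      rw [hr k] at hk
      have := EReal.coe_lt_coe_iff.mp hk
      linarith [hrlt k]
    exact ge_of_tendsto hck hev2
  have hrs_le : rs ≤ (inner ℝ q vs : ℝ) - br := by
    have : ∀ ε : ℝ, 0 < ε → rs ≤ ((inner ℝ q vs : ℝ) - br) + ε := fun ε hε => by
      linarith [hlow ε hε]
    exact le_of_forall_pos_le_add this
  have hTvs_ge : ((br : ℝ) : EReal) ≤ T vs := by
    have : (br : ℝ) ≤ (inner ℝ q vs : ℝ) - rs := by linarith
    calc ((br : ℝ) : EReal) ≤ (((inner ℝ q vs : ℝ) - rs : ℝ) : EReal) := by exact_mod_cast this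
    _ = T vs := by simp [hT, hrs, ← EReal.coe_sub]
  have hTvs_le : T vs ≤ EConj g q := le_iSup T vs
  have heq : EConj g q = (((inner ℝ q vs : ℝ) - rs : ℝ) : EReal) := by
    apply le_antisymm
    · rw [hbr]
      calc ((br:ℝ) : EReal) ≤ T vs := hTvs_ge
      _ = _ := by simp [hT, hrs, ← EReal.coe_sub]
    · rw [show (((inner ℝ q vs : ℝ) - rs : ℝ) : EReal) = T vs by simp [hT, hrs, ← EReal.coe_sub]]
      exact hTvs_le
  exact ⟨vs, hvsK, rs, hrs, heq⟩


/-- The real-valued conjugate. -/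
def Fc {m : ℕ} (g : Vec m → EReal) : Vec m → ℝ := fun q => (EConj g q).toReal

variable (hproper : EProper g) (hlsc : LowerSemicontinuous g)
  (hdom : {v | g v ≠ ⊤} = convexHull ℝ (M : Set (Vec m)))

include hproper hlsc hdom

lemma Fc_eq (q : Vec m) : EConj g q = ((Fc g q : ℝ) : EReal) := by
  obtain ⟨v, _, r, _, heq⟩ := econj_attain M g hproper hlsc hdom q
  rw [Fc, heq, EReal.toReal_coe]

lemma Fc_lower (q : Vec m) (v : Vec m) (r : ℝ) (hgv : g v = (r : EReal)) :
    (inner ℝ q v : ℝ) - r ≤ Fc g q := by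
  have h1 : ((inner ℝ q v : ℝ) : EReal) - g v ≤ EConj g q :=
    le_iSup (fun v => ((inner ℝ q v : ℝ) : EReal) - g v) v
  rw [hgv, ← EReal.coe_sub, Fc_eq M g hproper hlsc hdom q] at h1
  exact_mod_cast h1

lemma esubdiff_iff (q w : Vec m) :
    w ∈ ESubdiff (EConj g) q ↔ ∀ y, Fc g q + (inner ℝ w (y - q) : ℝ) ≤ Fc g y := by
  constructor
  · intro h y
    have := h y
    rw [Fc_eq M g hproper hlsc hdom q, Fc_eq M g hproper hlsc hdom y, ← EReal.coe_add] at this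
    exact_mod_cast this
  · intro h y
    rw [show EConj g q = ((Fc g q : ℝ) : EReal) from Fc_eq M g hproper hlsc hdom q,
      show EConj g y = ((Fc g y : ℝ) : EReal) from Fc_eq M g hproper hlsc hdom y,
      ← EReal.coe_add]
    exact_mod_cast h y

lemma esubdiff_nonempty (q : Vec m) :
    ∃ v ∈ convexHull ℝ (M : Set (Vec m)), v ∈ ESubdiff (EConj g) q := by
  obtain ⟨v, hvK, r, hgv, heq⟩ := econj_attain M g hproper hlsc hdom q
  refine ⟨v, hvK, (esubdiff_iff M g hproper hlsc hdom q v).mpr fun y => ?_⟩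
  have h1 : (inner ℝ y v : ℝ) - r ≤ Fc g y := Fc_lower M g hproper hlsc hdom y v r hgv
  have h2 : Fc g q = (inner ℝ q v : ℝ) - r := by
    have := Fc_eq M g hproper hlsc hdom q
    rw [heq] at this
    exact_mod_cast this.symm
  have h3 : (inner ℝ v (y - q) : ℝ) = (inner ℝ y v : ℝ) - (inner ℝ q v : ℝ) := by
    rw [inner_sub_right, real_inner_comm v y, real_inner_comm v q]
  rw [h2, h3]
  linarith

lemma esubdiff_subset (q w : Vec m) (hw : w ∈ ESubdiff (EConj g) q) :
    w ∈ convexHull ℝ (M : Set (Vec m)) := by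
  by_contra hwK
  have hKcl : IsClosed (convexHull ℝ (M : Set (Vec m))) :=
    (M.finite_toSet.isCompact_convexHull ℝ).isClosed
  obtain ⟨f, u, hfa, hfw⟩ :=
    geometric_hahn_banach_closed_point (convex_convexHull ℝ _) hKcl hwK
  set d := (InnerProductSpace.toDual ℝ (Vec m)).symm f with hd
  have hdapp : ∀ x : Vec m, (inner ℝ d x : ℝ) = f x := fun x =>
    InnerProductSpace.toDual_symm_apply
  obtain ⟨v', hv'K, r', hgv', heq'⟩ := econj_attain M g hproper hlsc hdom (q + d)
  have h1 : Fc g q + (inner ℝ w (q + d - q) : ℝ) ≤ Fc g (q + d) :=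
    (esubdiff_iff M g hproper hlsc hdom q w).mp hw (q + d)
  have h2 : Fc g (q + d) = (inner ℝ (q + d) v' : ℝ) - r' := by
    have := Fc_eq M g hproper hlsc hdom (q + d)
    rw [heq'] at this
    exact_mod_cast this.symm
  have h3 : (inner ℝ q v' : ℝ) - r' ≤ Fc g q := Fc_lower M g hproper hlsc hdom q v' r' hgv'
  have h4 : (inner ℝ (q + d) v' : ℝ) = (inner ℝ q v' : ℝ) + (inner ℝ d v' : ℝ) := inner_add_left _ _ _
  have h5 : (inner ℝ w (q + d - q) : ℝ) = (inner ℝ d w : ℝ) := by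
    rw [add_sub_cancel_left, real_inner_comm]
  have h6 : (inner ℝ d v' : ℝ) < u := hdapp v' ▸ hfa v' hv'K
  have h7 : u < (inner ℝ d w : ℝ) := hdapp w ▸ hfw
  rw [h5] at h1
  rw [h4] at h2
  linarith

lemma Fc_lip : ∃ C : NNReal, LipschitzWith C (Fc g) := by
  obtain ⟨R0, hR0⟩ := isBounded_iff_forall_norm_le.mp
    (M.finite_toSet.isCompact_convexHull ℝ).isBounded
  set R := max R0 0 with hRdef
  have hR : ∀ v ∈ convexHull ℝ (M : Set (Vec m)), ‖v‖ ≤ R := fun v hv =>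
    le_trans (hR0 v hv) (le_max_left _ _)
  refine ⟨Real.toNNReal R, LipschitzWith.of_dist_le_mul fun a b => ?_⟩
  have key : ∀ x y : Vec m, Fc g y - Fc g x ≤ R * ‖x - y‖ := by
    intro x y
    obtain ⟨v, hvK, hv⟩ := esubdiff_nonempty M g hproper hlsc hdom y
    have h1 : Fc g y + (inner ℝ v (x - y) : ℝ) ≤ Fc g x :=
      (esubdiff_iff M g hproper hlsc hdom y v).mp hv x
    have h2 : (inner ℝ v (x - y) : ℝ) ≥ -(R * ‖x - y‖) := by
      have habs := abs_real_inner_le_norm v (x - y)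
      have hn : ‖v‖ ≤ R := hR v hvK
      have habs2 : |(inner ℝ v (x - y) : ℝ)| ≤ R * ‖x - y‖ :=
        le_trans habs (by nlinarith [norm_nonneg (x - y), norm_nonneg v])
      linarith [(abs_le.mp habs2).1]
    linarith
  rw [Real.dist_eq, Real.coe_toNNReal R (le_max_right R0 0), dist_eq_norm]
  refine abs_le.mpr ⟨?_, ?_⟩
  · have := key a b
    linarith
  · have := key b a
    rw [norm_sub_rev] at this
    linarith

lemma Fc_cont : Continuous (Fc g) := by
  obtain ⟨C, hC⟩ := Fc_lip M g hproper hlsc hdom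
  exact hC.continuous

lemma esubdiff_of_differentiable (q : Vec m) (hd : DifferentiableAt ℝ (Fc g) q) :
    ∃ wg, ESubdiff (EConj g) q = {wg} := by
  set L := fderiv ℝ (Fc g) q with hL
  set wg := (InnerProductSpace.toDual ℝ (Vec m)).symm L with hwg
  have hwgapp : ∀ x : Vec m, (inner ℝ wg x : ℝ) = L x := fun x =>
    InnerProductSpace.toDual_symm_apply
  have key : ∀ w ∈ ESubdiff (EConj g) q, w = wg := by
    intro w hw
    have hiq := (esubdiff_iff M g hproper hlsc hdom q w).mp hw
    have hdir : ∀ d : Vec m, (inner ℝ w d : ℝ) ≤ L d := by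
      intro d
      have hpath : HasDerivAt (fun t : ℝ => q + t • d) d 0 := by
        simpa using ((hasDerivAt_id (0:ℝ)).smul_const d).const_add q
      have hψ : HasDerivAt (fun t : ℝ => Fc g (q + t • d)) (L d) 0 := by
        have h1 : HasFDerivAt (Fc g) L ((fun t : ℝ => q + t • d) 0) := by
          simpa using hd.hasFDerivAt
        exact h1.comp_hasDerivAt 0 hpath
      have hslope := hasDerivAt_iff_tendsto_slope.mp hψ
      have hslope' : Tendsto (slope (fun t : ℝ => Fc g (q + t • d)) 0) (𝓝[>] (0:ℝ))
          (𝓝 (L d)) := hslope.mono_left (nhdsWithin_mono _ fun t ht => ne_of_gt ht)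
      refine ge_of_tendsto hslope' ?_
      filter_upwards [self_mem_nhdsWithin] with t ht
      have ht' : (0:ℝ) < t := ht
      have hineq := hiq (q + t • d)
      have hinner : (inner ℝ w (q + t • d - q) : ℝ) = t * (inner ℝ w d : ℝ) := by
        rw [add_sub_cancel_left, real_inner_smul_right]
      rw [hinner] at hineq
      rw [slope_def_field]
      have hf0 : Fc g (q + (0:ℝ) • d) = Fc g q := by simp
      rw [hf0, sub_zero, le_div_iff₀ ht', mul_comm]
      linarith
    have hall : ∀ d, (inner ℝ w d : ℝ) = L d := fun d => le_antisymm (hdir d) (by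
      have := hdir (-d)
      rw [inner_neg_right, map_neg] at this
      linarith)
    have hz : ∀ d, (inner ℝ (w - wg) d : ℝ) = 0 := by
      intro d
      rw [inner_sub_left, hall d, hwgapp d]
      ring
    have hz2 := hz (w - wg)
    rwa [inner_self_eq_zero, sub_eq_zero] at hz2
  obtain ⟨v0, _, hv0⟩ := esubdiff_nonempty M g hproper hlsc hdom q
  exact ⟨wg, Set.eq_singleton_iff_unique_mem.mpr ⟨(key v0 hv0) ▸ hv0, key⟩⟩


omit hproper hlsc hdom in
lemma finset_sep (v : Vec m) : ∃ δ : ℝ, 0 < δ ∧ ∀ u ∈ M, ‖u - v‖ ≤ δ → u = v := by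
  classical
  set s := M.filter (fun u => u ≠ v) with hs
  by_cases hne : s.Nonempty
  · have hpos : 0 < s.inf' hne fun u => ‖u - v‖ := by
      rw [Finset.lt_inf'_iff]
      intro u hu
      exact norm_sub_pos_iff.mpr (Finset.mem_filter.mp hu).2
    refine ⟨(s.inf' hne fun u => ‖u - v‖)/2, by linarith, ?_⟩
    intro u hu hle
    by_contra hne2
    have hus : u ∈ s := Finset.mem_filter.mpr ⟨hu, hne2⟩
    have := Finset.inf'_le (fun u => ‖u - v‖) hus
    linarith
  · exact ⟨1, one_pos, fun u hu hle => by
      by_contra h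
      exact hne ⟨u, Finset.mem_filter.mpr ⟨hu, h⟩⟩⟩

lemma esubdiff_usc (q v : Vec m) (hq : ESubdiff (EConj g) q = {v}) (δ : ℝ) (hδ : 0 < δ) :
    ∃ ε : ℝ, 0 < ε ∧ ∀ q', dist q' q < ε →
      ESubdiff (EConj g) q' ⊆ Metric.closedBall v δ := by
  by_contra h
  push_neg at h
  have h' : ∀ k : ℕ, ∃ q', dist q' q < 1/(k+1) ∧
      ∃ w, w ∈ ESubdiff (EConj g) q' ∧ δ < ‖w - v‖ := by
    intro k
    obtain ⟨q', hq1, hq2⟩ := h (1/(k+1)) (by positivity)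
    obtain ⟨w, hw1, hw2⟩ := not_subset.mp hq2
    refine ⟨q', hq1, w, hw1, ?_⟩
    have h3 : ¬ dist w v ≤ δ := fun hc => hw2 (Metric.mem_closedBall.mpr hc)
    rw [dist_eq_norm] at h3
    linarith [lt_of_not_ge h3]
  choose qk hqk w hw hwv using h'
  have hwK : ∀ k, w k ∈ convexHull ℝ (M : Set (Vec m)) := fun k =>
    esubdiff_subset M g hproper hlsc hdom _ _ (hw k)
  obtain ⟨ws, hwsK, φ, hφ, hconv⟩ :=
    (M.finite_toSet.isCompact_convexHull ℝ).tendsto_subseq hwK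
  have hone : Tendsto (fun k : ℕ => 1/((φ k : ℝ) + 1)) atTop (nhds 0) := by
    apply Tendsto.comp tendsto_one_div_add_atTop_nhds_zero_nat ?_ |>.congr (fun k => rfl)
    exact hφ.tendsto_atTop
  have hqconv : Tendsto (fun k => qk (φ k)) atTop (nhds q) := by
    rw [tendsto_iff_dist_tendsto_zero]
    exact squeeze_zero (fun k => dist_nonneg) (fun k => (hqk (φ k)).le) hone
  have hwssub : ws ∈ ESubdiff (EConj g) q := by
    rw [esubdiff_iff M g hproper hlsc hdom]
    intro y
    have hk : ∀ k, Fc g (qk (φ k)) + (inner ℝ (w (φ k)) (y - qk (φ k)) : ℝ) ≤ Fc g y := fun k =>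
      (esubdiff_iff M g hproper hlsc hdom _ _).mp (hw (φ k)) y
    have hlim : Tendsto
        (fun k => Fc g (qk (φ k)) + (inner ℝ (w (φ k)) (y - qk (φ k)) : ℝ)) atTop
        (nhds (Fc g q + (inner ℝ ws (y - q) : ℝ))) := by
      exact Tendsto.add (((Fc_cont M g hproper hlsc hdom).tendsto q).comp hqconv)
        (hconv.inner (tendsto_const_nhds.sub hqconv))
    exact le_of_tendsto hlim (Eventually.of_forall hk)
  rw [hq] at hwssub
  have hws_eq : ws = v := hwssub
  have hnt : Tendsto (fun k => ‖w (φ k) - v‖) atTop (nhds ‖ws - v‖) :=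
    (hconv.sub tendsto_const_nhds).norm
  have hge : δ ≤ ‖ws - v‖ := ge_of_tendsto hnt (Eventually.of_forall fun k => (hwv (φ k)).le)
  rw [hws_eq, sub_self, norm_zero] at hge
  linarith

lemma esubdiff_locally_const (hQM : ∀ q v : Vec m, ESubdiff (EConj g) q = {v} → v ∈ M)
    (q v : Vec m) (hq : ESubdiff (EConj g) q = {v}) :
    ∃ ε : ℝ, 0 < ε ∧ ∀ q', dist q' q < ε → ESubdiff (EConj g) q' = {v} := by
  obtain ⟨δ, hδ, hsep⟩ := finset_sep M v
  obtain ⟨ε, hε, husc⟩ := esubdiff_usc M g hproper hlsc hdom q v hq δ hδ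
  obtain ⟨C, hC⟩ := Fc_lip M g hproper hlsc hdom
  have hD : ∀ᵐ x : Vec m ∂volume, DifferentiableAt ℝ (Fc g) x := hC.ae_differentiableAt
  set A := {q' : Vec m | v ∈ ESubdiff (EConj g) q'} with hA
  have hAcl : IsClosed A := by
    have hAeq : A = ⋂ y, {q' | Fc g q' + (inner ℝ v (y - q') : ℝ) ≤ Fc g y} := by
      ext q'
      simp only [hA, mem_iInter, mem_setOf_eq]
      exact esubdiff_iff M g hproper hlsc hdom q' v
    rw [hAeq]
    refine isClosed_iInter fun y => isClosed_le ?_ continuous_const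
    exact (Fc_cont M g hproper hlsc hdom).add
      (Continuous.inner continuous_const (continuous_const.sub continuous_id))
  have hball : Metric.ball q ε ⊆ A := by
    by_contra hsub
    obtain ⟨q0, hq0ball, hq0A⟩ := not_subset.mp hsub
    have hO : IsOpen (Metric.ball q ε ∩ Aᶜ) := Metric.isOpen_ball.inter hAcl.isOpen_compl
    have hOD : Metric.ball q ε ∩ Aᶜ ⊆ {x | ¬ DifferentiableAt ℝ (Fc g) x} := by
      rintro x ⟨hb, hc⟩ 
      intro hdiff
      obtain ⟨wg, hwg⟩ := esubdiff_of_differentiable M g hproper hlsc hdom x hdiff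
      have hwgM : wg ∈ M := hQM x wg hwg
      have hwgmem : wg ∈ ESubdiff (EConj g) x := by rw [hwg]; exact rfl
      have hwgball : wg ∈ Metric.closedBall v δ := husc x (Metric.mem_ball.mp hb) hwgmem
      have hwgv : wg = v := by
        apply hsep wg hwgM
        have := Metric.mem_closedBall.mp hwgball
        rwa [dist_eq_norm] at this
      exact hc (mem_setOf.mpr (hwgv ▸ hwgmem))
    have hOnull : volume (Metric.ball q ε ∩ Aᶜ) = 0 :=
      measure_mono_null hOD (ae_iff.mp hD)
    have hempty : Metric.ball q ε ∩ Aᶜ = ∅ := (hO.measure_eq_zero_iff volume).mp hOnull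
    exact (eq_empty_iff_forall_notMem.mp hempty q0) ⟨hq0ball, hq0A⟩
  have hvq : v ∈ ESubdiff (EConj g) q := by rw [hq]; exact rfl
  have haff : ∀ q' ∈ Metric.ball q ε, Fc g q' = Fc g q + (inner ℝ v (q' - q) : ℝ) := by
    intro q' hq'
    have h1 := (esubdiff_iff M g hproper hlsc hdom q v).mp hvq q'
    have h2 := (esubdiff_iff M g hproper hlsc hdom q' v).mp (hball hq') q
    have h3 : (inner ℝ v (q - q') : ℝ) = -(inner ℝ v (q' - q) : ℝ) := by
      rw [← inner_neg_right, neg_sub]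
    rw [h3] at h2
    linarith
  refine ⟨ε, hε, fun q' hq' => ?_⟩
  have hq'ball : q' ∈ Metric.ball q ε := Metric.mem_ball.mpr hq'
  refine Set.eq_singleton_iff_unique_mem.mpr ⟨hball hq'ball, ?_⟩
  intro w hw
  have hkey : ∀ d : Vec m, (inner ℝ w d : ℝ) ≤ (inner ℝ v d : ℝ) := by
    intro d
    have hq'lt : dist q' q < ε := hq'
    set t := (ε - dist q' q)/(2*(‖d‖+1)) with ht
    have htpos : 0 < t := by
      apply div_pos (by linarith) (by positivity)
    have hnorm : dist (q' + t • d) q' = t * ‖d‖ := by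
      rw [dist_eq_norm, add_sub_cancel_left, norm_smul, Real.norm_eq_abs,
        abs_of_pos htpos]
    have hmem : q' + t • d ∈ Metric.ball q ε := by
      rw [Metric.mem_ball]
      have htr := dist_triangle (q' + t • d) q' q
      have hbd : t * ‖d‖ ≤ (ε - dist q' q)/2 := by
        rw [ht]
        rw [div_mul_eq_mul_div, div_le_div_iff₀ (by positivity) (by norm_num)]
        nlinarith [norm_nonneg d]
      rw [hnorm] at htr
      linarith
    have hsubineq := (esubdiff_iff M g hproper hlsc hdom q' w).mp hw (q' + t • d)
    have haff1 := haff q' hq'ball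
    have haff2 := haff _ hmem
    have hia : (inner ℝ v (q' + t • d - q) : ℝ)
        = (inner ℝ v (q' - q) : ℝ) + t * (inner ℝ v d : ℝ) := by
      rw [show q' + t • d - q = (q' - q) + t • d by abel, inner_add_right,
        real_inner_smul_right]
    have hib : (inner ℝ w (q' + t • d - q') : ℝ) = t * (inner ℝ w d : ℝ) := by
      rw [add_sub_cancel_left, real_inner_smul_right]
    rw [haff1, haff2, hia, hib] at hsubineq
    have := le_of_mul_le_mul_left (by linarith : t * (inner ℝ w d : ℝ) ≤ t * (inner ℝ v d : ℝ)) htpos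
    exact this
  have h1 := hkey (w - v)
  have h2 : (inner ℝ (w - v) (w - v) : ℝ) ≤ 0 := by
    rw [inner_sub_left]
    linarith
  have h3 : w - v = 0 := by
    have := real_inner_self_nonpos.mp h2
    exact this
  exact sub_eq_zero.mp h3


lemma Q_open (hQM : ∀ q v : Vec m, ESubdiff (EConj g) q = {v} → v ∈ M) :
    IsOpen {q : Vec m | ∃ v, ESubdiff (EConj g) q = {v}} := by
  rw [Metric.isOpen_iff]
  rintro q ⟨v, hv⟩
  obtain ⟨ε, hε, h⟩ := esubdiff_locally_const M g hproper hlsc hdom hQM q v hv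
  exact ⟨ε, hε, fun q' hq' => ⟨v, h q' hq'⟩⟩

lemma esubdiff_unif (hQM : ∀ q v : Vec m, ESubdiff (EConj g) q = {v} → v ∈ M)
    (P : Set (Vec m)) (hP : IsCompact P)
    (hPQ : P ⊆ {q : Vec m | ∃ v, ESubdiff (EConj g) q = {v}}) :
    ∃ ε : ℝ, 0 < ε ∧ ∀ p ∈ P, ∀ q', dist q' p < ε →
      ESubdiff (EConj g) q' = ESubdiff (EConj g) p := by
  rcases P.eq_empty_or_nonempty with hPe | hPne
  · exact ⟨1, one_pos, by simp [hPe]⟩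
  have hch : ∀ p ∈ P, ∃ ε : ℝ, 0 < ε ∧ ∀ q', dist q' p < ε →
      ESubdiff (EConj g) q' = ESubdiff (EConj g) p := by
    intro p hp
    obtain ⟨v, hv⟩ := hPQ hp
    obtain ⟨ε, hε, h⟩ := esubdiff_locally_const M g hproper hlsc hdom hQM p v hv
    exact ⟨ε, hε, fun q' hq' => by rw [h q' hq', hv]⟩
  choose! εf hεf hf using hch
  have hcover : P ⊆ ⋃ p ∈ P, Metric.ball p (εf p / 2) := fun p hp =>
    Set.mem_biUnion hp (Metric.mem_ball_self (by linarith [hεf p hp]))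
  obtain ⟨t, htP, htfin, htcover⟩ :=
    hP.elim_finite_subcover_image (fun p _ => Metric.isOpen_ball) hcover
  have htne : t.Nonempty := by
    obtain ⟨p, hp⟩ := hPne
    obtain ⟨p0, hp0t, _⟩ := Set.mem_iUnion₂.mp (htcover hp)
    exact ⟨p0, hp0t⟩
  have hFne : htfin.toFinset.Nonempty := by
    obtain ⟨p0, hp0⟩ := htne
    exact ⟨p0, htfin.mem_toFinset.mpr hp0⟩
  set ε := htfin.toFinset.inf' hFne (fun p => εf p / 2) with hεdef
  have hεpos : 0 < ε := by
    rw [hεdef, Finset.lt_inf'_iff]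
    intro p hp
    have hpP : p ∈ P := htP (htfin.mem_toFinset.mp hp)
    linarith [hεf p hpP]
  refine ⟨ε, hεpos, fun p hp q' hq' => ?_⟩
  obtain ⟨p0, hp0t, hpball⟩ := Set.mem_iUnion₂.mp (htcover hp)
  have hp0P : p0 ∈ P := htP hp0t
  have hεle : ε ≤ εf p0 / 2 := Finset.inf'_le _ (htfin.mem_toFinset.mpr hp0t)
  have hd1 : dist p p0 < εf p0 / 2 := Metric.mem_ball.mp hpball
  have hd2 : dist q' p0 < εf p0 := by
    have := dist_triangle q' p p0
    linarith
  have h1 : ESubdiff (EConj g) q' = ESubdiff (EConj g) p0 := hf p0 hp0P q' hd2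
  have h2 : ESubdiff (EConj g) p = ESubdiff (EConj g) p0 :=
    hf p0 hp0P p (by linarith [hεf p0 hp0P])
  rw [h1, h2]

end Core

set_option maxHeartbeats 2000000 in
/-- locally strong convergence of the control: in the setting of the
dual stability result, let `Q ⊆ ℝᵐ` be the set where `∂g*` is single-valued and
`Ω_P = {x ∈ Ω : p̄(x) ∈ P}`. If the minimizers `u_n` of `E^{z_n}` have dual variables
`p_n → p̄` in `V*` and limit minimizer `ū`, then (i) for compact `P ⊂⊂ Q` and `n` large,
`u_n = ū ∈ M` a.e. on `Ω_P`; (ii) `u_n → ū` strongly in `L²(Ω_Q;ℝᵐ)` and `ū ∈ M`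
a.e. on `Ω_Q`. -/
theorem locally_strong_convergence_of_control
    {n m : ℕ} (hm : 2 ≤ m)
    (Ω : Set (Vec n)) (hΩopen : IsOpen Ω) (hΩbdd : Bornology.IsBounded Ω)
    {Y : Type*} [NormedAddCommGroup Y] [InnerProductSpace ℝ Y] [CompleteSpace Y]
    (M : Finset (Vec m)) (g : Vec m → EReal)
    (hproper : EProper g) (hconv : EConvexOn g) (hlsc : LowerSemicontinuous g)
    (hdom : {v | g v ≠ ⊤} = convexHull ℝ (M : Set (Vec m)))
    (S : Lp (Vec m) 2 (volume.restrict Ω) → Y)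
    -- (H1) weak-to-weak continuity
    (hS : ∀ (u : ℕ → Lp (Vec m) 2 (volume.restrict Ω)) (l : Lp (Vec m) 2 (volume.restrict Ω)),
      WeakTendsto u l → WeakTendsto (fun i => S (u i)) (S l))
    -- (H2) Fréchet differentiability
    (S' : Lp (Vec m) 2 (volume.restrict Ω) → (Lp (Vec m) 2 (volume.restrict Ω) →L[ℝ] Y))
    (hS' : ∀ u, HasFDerivAt S (S' u) u)
    -- (H3) compactness
    (hScpt : ∀ (u : ℕ → Lp (Vec m) 2 (volume.restrict Ω)) (l : Lp (Vec m) 2 (volume.restrict Ω)),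
      WeakTendsto u l → Tendsto (fun i => ‖S (u i) - S l‖) atTop (nhds (0:ℝ)))
    -- (H4) adjoint convergence in `V* ↪ L^∞(Ω;ℝᵐ)`
    (Vd : Type*) [NormedAddCommGroup Vd] [NormedSpace ℝ Vd]
    (ι : Vd →L[ℝ] Lp (Vec m) 2 (volume.restrict Ω)) (hι : Function.Injective ι)
    (j : Vd →L[ℝ] Lp (Vec m) ⊤ (volume.restrict Ω)) (hj : Function.Injective j)
    (hιj : ∀ w : Vd, (fun x => (ι w) x) =ᵐ[volume.restrict Ω] (fun x => (j w) x))
    (P : Lp (Vec m) 2 (volume.restrict Ω) → Y → Vd)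
    (hP : ∀ u y, ι (P u y) = ContinuousLinearMap.adjoint (S' u) y)
    (hadj : ∀ (ui : ℕ → Lp (Vec m) 2 (volume.restrict Ω)) (l : Lp (Vec m) 2 (volume.restrict Ω)),
      WeakTendsto ui l → ∀ y : Y,
        Tendsto (fun i => ‖P (ui i) y - P l y‖) atTop (nhds (0:ℝ)))
    -- targets, minimizers and dual variables
    (z : ℕ → Y) (zbar : Y) (hz : Tendsto (fun i => ‖z i - zbar‖) atTop (nhds (0:ℝ)))
    (u : ℕ → Lp (Vec m) 2 (volume.restrict Ω))
    (hu : ∀ i, ∀ v, energy (volume.restrict Ω) S (z i) g (u i) ≤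
      energy (volume.restrict Ω) S (z i) g v)
    (ubar : Lp (Vec m) 2 (volume.restrict Ω))
    (hubar : ∀ v, energy (volume.restrict Ω) S zbar g ubar ≤
      energy (volume.restrict Ω) S zbar g v)
    (huw : WeakTendsto u ubar)
    (pn : ℕ → Lp (Vec m) 2 (volume.restrict Ω))
    (hpn : ∀ i, pn i = ContinuousLinearMap.adjoint (S' (u i)) (z i - S (u i)))
    (pbar : Lp (Vec m) 2 (volume.restrict Ω))
    (hpbar : pbar = ContinuousLinearMap.adjoint (S' ubar) (zbar - S ubar))
    (hpconv : Tendsto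
      (fun i => ‖P (u i) (z i - S (u i)) - P ubar (zbar - S ubar)‖) atTop (nhds (0:ℝ)))
    -- pointwise optimality: `u_n(x) ∈ ∂g*(p_n(x))` and `ū(x) ∈ ∂g*(p̄(x))` a.e.
    (hptw : ∀ i, ∀ᵐ x ∂(volume.restrict Ω), (u i) x ∈ ESubdiff (EConj g) ((pn i) x))
    (hptwbar : ∀ᵐ x ∂(volume.restrict Ω), ubar x ∈ ESubdiff (EConj g) (pbar x))
    -- on the single-valuedness set `Q` the value of `∂g*` lies in `M`
    (hQM : ∀ q : Vec m, ∀ v, ESubdiff (EConj g) q = {v} → v ∈ M) :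
    -- (i) for any compact subset of the single-valuedness set `Q`,
    -- eventually `u_n = ū ∈ M` a.e. on `Ω_P`
    (∀ Pset : Set (Vec m), IsCompact Pset →
      Pset ⊆ {q | ∃ v, ESubdiff (EConj g) q = {v}} →
      ∃ N : ℕ, ∀ i ≥ N,
        ∀ᵐ x ∂((volume.restrict Ω).restrict {x | pbar x ∈ Pset}),
          (u i) x = ubar x ∧ ubar x ∈ (M : Set (Vec m)))
    -- (ii) strong convergence in `L²(Ω_Q;ℝᵐ)` and `ū ∈ M` a.e. on `Ω_Q`
    ∧ Tendsto (fun i => ∫ x in {x | pbar x ∈ {q | ∃ v, ESubdiff (EConj g) q = {v}}},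
        ‖(u i) x - ubar x‖^2 ∂(volume.restrict Ω)) atTop (nhds (0:ℝ))
    ∧ (∀ᵐ x ∂((volume.restrict Ω).restrict
        {x | pbar x ∈ {q | ∃ v, ESubdiff (EConj g) q = {v}}}),
        ubar x ∈ (M : Set (Vec m))) := by
  classical
  haveI : IsFiniteMeasure (volume.restrict Ω) :=
    ⟨by rw [Measure.restrict_apply_univ]; exact hΩbdd.measure_lt_top⟩
  obtain ⟨p₀, hp₀m, hp₀⟩ := Lp.aestronglyMeasurable pbar
  set Qs := {q : Vec m | ∃ v, ESubdiff (EConj g) q = {v}} with hQs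
  have hQopen : IsOpen Qs := Q_open M g hproper hlsc hdom hQM
  have hsetae : ∀ T : Set (Vec m), {x | pbar x ∈ T} =ᵐ[volume.restrict Ω] (p₀ ⁻¹' T) := by
    intro T
    exact Filter.eventuallyEq_set.mpr
      (hp₀.mono fun x hx => by rw [Set.mem_setOf_eq, Set.mem_preimage, hx])
  -- `L^∞` convergence of the dual variables
  have hkey : ∀ ε : ℝ, 0 < ε → ∃ N : ℕ, ∀ i ≥ N, ∀ᵐ x ∂(volume.restrict Ω), ‖(pn i) x - pbar x‖ < ε := by
    intro ε hε
    have hpnj : ∀ i, (fun x => (pn i) x)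
        =ᵐ[volume.restrict Ω] (fun x => (j (P (u i) (z i - S (u i)))) x) := by
      intro i
      rw [show pn i = ι (P (u i) (z i - S (u i))) from by rw [hpn i, hP]]
      exact hιj _
    have hpbarj : (fun x => pbar x) =ᵐ[volume.restrict Ω] (fun x => (j (P ubar (zbar - S ubar))) x) := by
      rw [show pbar = ι (P ubar (zbar - S ubar)) from by rw [hpbar, hP]]
      exact hιj _
    have hjnorm : Tendsto (fun i =>
        ‖j (P (u i) (z i - S (u i))) - j (P ubar (zbar - S ubar))‖) atTop (nhds 0) := by
      have hb : ∀ i, ‖j (P (u i) (z i - S (u i))) - j (P ubar (zbar - S ubar))‖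
          ≤ ‖j‖ * ‖P (u i) (z i - S (u i)) - P ubar (zbar - S ubar)‖ := by
        intro i
        rw [← map_sub]
        exact j.le_opNorm _
      have h0 : Tendsto (fun i =>
          ‖j‖ * ‖P (u i) (z i - S (u i)) - P ubar (zbar - S ubar)‖) atTop (nhds 0) := by
        simpa using hpconv.const_mul ‖j‖
      exact squeeze_zero (fun i => norm_nonneg _) hb h0
    obtain ⟨N, hN⟩ := (Metric.tendsto_atTop.mp hjnorm) ε hε
    refine ⟨N, fun i hi => ?_⟩
    have hd := hN i hi
    rw [Real.dist_eq, sub_zero, abs_of_nonneg (norm_nonneg _)] at hd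
    set h := j (P (u i) (z i - S (u i))) - j (P ubar (zbar - S ubar)) with hh
    have hae : ∀ᵐ x ∂(volume.restrict Ω), ‖h x‖ ≤ ‖h‖ := by
      have h1 := enorm_ae_le_eLpNormEssSup (fun x => h x) (volume.restrict Ω)
      have h2 : eLpNormEssSup (fun x => h x) (volume.restrict Ω) = ENNReal.ofReal ‖h‖ := by
        rw [Lp.norm_def, ← eLpNorm_exponent_top, ENNReal.ofReal_toReal (Lp.eLpNorm_ne_top h)]
      filter_upwards [h1] with x hx
      rw [h2] at hx
      have h3 : ENNReal.ofReal ‖h x‖ ≤ ENNReal.ofReal ‖h‖ := by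
        rw [ofReal_norm]
        exact hx
      exact (ENNReal.ofReal_le_ofReal_iff (norm_nonneg _)).mp h3
    filter_upwards [hae, Lp.coeFn_sub (j (P (u i) (z i - S (u i))))
      (j (P ubar (zbar - S ubar))), hpnj i, hpbarj] with x hx1 hx2 hx3 hx4
    have hx2' : h x = (j (P (u i) (z i - S (u i)))) x - (j (P ubar (zbar - S ubar))) x := hx2
    calc ‖(pn i) x - pbar x‖
        = ‖h x‖ := by rw [hx2', hx3, hx4]
      _ ≤ ‖h‖ := hx1
      _ < ε := hd
  -- eventual a.e. equality above compact subsets of `Q`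
  have Hev : ∀ Pset : Set (Vec m), IsCompact Pset → Pset ⊆ Qs →
      ∃ N, ∀ i ≥ N, ∀ᵐ x ∂(volume.restrict Ω), pbar x ∈ Pset →
        ((u i) x = ubar x ∧ ubar x ∈ (M : Set (Vec m))) := by
    intro Pset hcpt hsub
    obtain ⟨ε, hε, hloc⟩ := esubdiff_unif M g hproper hlsc hdom hQM Pset hcpt hsub
    obtain ⟨N, hN⟩ := hkey ε hε
    refine ⟨N, fun i hi => ?_⟩
    filter_upwards [hN i hi, hptw i, hptwbar] with x hx1 hx2 hx3 hxP
    obtain ⟨v, hv⟩ := hsub hxP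
    have he : ESubdiff (EConj g) ((pn i) x) = ESubdiff (EConj g) (pbar x) :=
      hloc _ hxP _ (by rw [dist_eq_norm]; exact hx1)
    have h1 : (u i) x = v := by
      have hm : (u i) x ∈ ESubdiff (EConj g) (pbar x) := he ▸ hx2
      rw [hv] at hm
      exact hm
    have h2 : ubar x = v := by
      rw [hv] at hx3
      exact hx3
    exact ⟨by rw [h1, h2], h2 ▸ hQM _ v hv⟩
  refine ⟨?_, ?_, ?_⟩
  · -- part (i)
    intro Pset hcpt hsub
    obtain ⟨N, hN⟩ := Hev Pset hcpt hsub
    refine ⟨N, fun i hi => ?_⟩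
    have hnm : NullMeasurableSet {x | pbar x ∈ Pset} (volume.restrict Ω) :=
      ((hcpt.isClosed.measurableSet.preimage hp₀m.measurable).nullMeasurableSet).congr
        (hsetae Pset).symm
    filter_upwards [ae_restrict_of_ae (hN i hi), ae_restrict_mem₀ hnm] with x hx1 hx2
    exact hx1 hx2
  · -- part (ii)
    rw [Metric.tendsto_atTop]
    intro η hη
    obtain ⟨R0, hR0⟩ := isBounded_iff_forall_norm_le.mp
      (M.finite_toSet.isCompact_convexHull ℝ).isBounded
    set R := max R0 0 with hR
    have hRK : ∀ w ∈ convexHull ℝ (M : Set (Vec m)), ‖w‖ ≤ R := fun w hw =>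
      le_trans (hR0 w hw) (le_max_left _ _)
    have hR0' : (0:ℝ) ≤ R := le_max_right _ _
    set B := (2*R)^2 + 1 with hB
    have hBpos : 0 < B := by positivity
    -- a compact exhaustion of the open set `Qs`
    set Ks : ℕ → Set (Vec m) := fun k =>
      Metric.closedBall 0 k ∩ {q | ∀ y, y ∉ Qs → 1/((k:ℝ)+1) ≤ dist q y} with hKs
    have hKcl : ∀ k, IsClosed (Ks k) := by
      intro k
      apply IsClosed.inter Metric.isClosed_closedBall
      have hset : {q : Vec m | ∀ y, y ∉ Qs → 1/((k:ℝ)+1) ≤ dist q y}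
          = ⋂ y ∈ Qsᶜ, {q | 1/((k:ℝ)+1) ≤ dist q y} := by
        ext q
        simp [Set.mem_iInter]
      rw [hset]
      exact isClosed_biInter fun y _ =>
        isClosed_le continuous_const (Continuous.dist continuous_id continuous_const)
    have hKcpt : ∀ k, IsCompact (Ks k) := fun k =>
      Metric.isCompact_of_isClosed_isBounded (hKcl k)
        (Metric.isBounded_closedBall.subset Set.inter_subset_left)
    have hKQ : ∀ k, Ks k ⊆ Qs := by
      intro k q hq
      by_contra hqQ
      have h2 := hq.2 q hqQ
      rw [dist_self] at h2
      have h3 : (0:ℝ) < 1/((k:ℝ)+1) := by positivity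
      linarith
    have hKmono : Monotone Ks := by
      intro a b hab q hq
      have hab' : (a:ℝ) ≤ b := by exact_mod_cast hab
      refine ⟨Metric.closedBall_subset_closedBall (by exact_mod_cast hab) hq.1, ?_⟩
      intro y hy
      have h1 := hq.2 y hy
      have h2 : 1/((b:ℝ)+1) ≤ 1/((a:ℝ)+1) := by
        apply one_div_le_one_div_of_le (by positivity)
        linarith
      linarith
    have hKun : ⋃ k, Ks k = Qs := by
      apply Set.Subset.antisymm (Set.iUnion_subset hKQ)
      intro q hq
      obtain ⟨r, hr, hball⟩ := Metric.isOpen_iff.mp hQopen q hq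
      set k := ⌈max ‖q‖ (1/r)⌉₊ with hk
      refine Set.mem_iUnion.mpr ⟨k, ?_, ?_⟩
      · rw [Metric.mem_closedBall, dist_zero_right]
        exact le_trans (le_max_left _ _) (Nat.le_ceil _)
      · intro y hy
        have hdist : r ≤ dist q y := by
          by_contra hlt
          push_neg at hlt
          exact hy (hball (Metric.mem_ball.mpr (by rwa [dist_comm])))
        have h1r : 1/r ≤ (k:ℝ) + 1 :=
          le_trans (le_trans (le_max_right _ _) (Nat.le_ceil _)) (by linarith)
        have h2 : 1/((k:ℝ)+1) ≤ r := by
          have h5 : 1/((k:ℝ)+1) ≤ 1/(1/r) := one_div_le_one_div_of_le (by positivity) h1r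
          rwa [one_div_one_div] at h5
        linarith
    have hskm : ∀ k, MeasurableSet (p₀ ⁻¹' Ks k) := fun k =>
      (hKcl k).measurableSet.preimage hp₀m.measurable
    have hskmono : Monotone (fun k => p₀ ⁻¹' Ks k) := fun a b hab =>
      Set.preimage_mono (hKmono hab)
    have hskun : ⋃ k, p₀ ⁻¹' Ks k = p₀ ⁻¹' Qs := by
      rw [← Set.preimage_iUnion, hKun]
    have htend : Tendsto (fun k => (volume.restrict Ω) (p₀ ⁻¹' Ks k)) atTop
        (nhds ((volume.restrict Ω) (p₀ ⁻¹' Qs))) := by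
      have h := tendsto_measure_iUnion_atTop (μ := volume.restrict Ω) hskmono
      rw [hskun] at h
      exact h
    set δ' := ENNReal.ofReal (η/B) with hδ'
    have hδ'0 : δ' ≠ 0 := ne_of_gt (ENNReal.ofReal_pos.mpr (by positivity))
    have hδ't : δ' ≠ ⊤ := ENNReal.ofReal_ne_top
    have hex : ∃ k, (volume.restrict Ω) ((p₀ ⁻¹' Qs) \ (p₀ ⁻¹' Ks k)) < δ' := by
      by_cases hcase : (volume.restrict Ω) (p₀ ⁻¹' Qs) < δ'
      · exact ⟨0, lt_of_le_of_lt (measure_mono Set.diff_subset) hcase⟩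
      · push_neg at hcase
        have ha0 : (volume.restrict Ω) (p₀ ⁻¹' Qs) ≠ 0 := by
          intro h0
          rw [h0] at hcase
          exact hδ'0 (le_antisymm hcase zero_le)
        have hat : (volume.restrict Ω) (p₀ ⁻¹' Qs) ≠ ⊤ := measure_ne_top (volume.restrict Ω) _
        have hhalf0 : δ'/2 ≠ 0 := ne_of_gt (ENNReal.half_pos hδ'0)
        have hhalft : δ'/2 ≠ ⊤ := (ENNReal.div_lt_top hδ't (by norm_num)).ne
        have hb : (volume.restrict Ω) (p₀ ⁻¹' Qs) - δ'/2 < (volume.restrict Ω) (p₀ ⁻¹' Qs) := ENNReal.sub_lt_self hat ha0 hhalf0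
        obtain ⟨k, hk⟩ := (htend.eventually_const_lt hb).exists
        refine ⟨k, ?_⟩
        apply measure_diff_lt_of_lt_add (hskm k).nullMeasurableSet
          (Set.preimage_mono (hKQ k)) (measure_ne_top (volume.restrict Ω) _)
        calc (volume.restrict Ω) (p₀ ⁻¹' Qs) = ((volume.restrict Ω) (p₀ ⁻¹' Qs) - δ'/2) + δ'/2 :=
              (tsub_add_cancel_of_le (le_trans ENNReal.half_le_self hcase)).symm
          _ < (volume.restrict Ω) (p₀ ⁻¹' Ks k) + δ'/2 := ENNReal.add_lt_add_right hhalft hk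
          _ ≤ (volume.restrict Ω) (p₀ ⁻¹' Ks k) + δ' := add_le_add le_rfl ENNReal.half_le_self
    obtain ⟨k, hk⟩ := hex
    obtain ⟨N, hN⟩ := Hev (Ks k) (hKcpt k) (hKQ k)
    refine ⟨N, fun i hi => ?_⟩
    have hres : (volume.restrict Ω).restrict {x | pbar x ∈ Qs} = (volume.restrict Ω).restrict (p₀ ⁻¹' Qs) :=
      Measure.restrict_congr_set (hsetae Qs)
    rw [hres]
    have hmeas := (((Lp.aestronglyMeasurable (u i)).sub (Lp.aestronglyMeasurable ubar)).norm).pow 2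
    have hbd : ∀ᵐ x ∂(volume.restrict Ω), ‖(u i) x - ubar x‖ ≤ 2*R := by
      filter_upwards [hptw i, hptwbar] with x h1 h2
      have hu1 : ‖(u i) x‖ ≤ R := hRK _ (esubdiff_subset M g hproper hlsc hdom _ _ h1)
      have hu2 : ‖ubar x‖ ≤ R := hRK _ (esubdiff_subset M g hproper hlsc hdom _ _ h2)
      calc ‖(u i) x - ubar x‖ ≤ ‖(u i) x‖ + ‖ubar x‖ := norm_sub_le _ _
        _ ≤ 2*R := by linarith
    have hint : Integrable (fun x => ‖(u i) x - ubar x‖^2) (volume.restrict Ω) := by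
      apply Integrable.mono' (integrable_const ((2*R)^2)) hmeas
      filter_upwards [hbd] with x hx
      rw [Real.norm_eq_abs, abs_of_nonneg (sq_nonneg _)]
      exact pow_le_pow_left₀ (norm_nonneg _) hx 2
    set G := ((p₀ ⁻¹' Ks k)ᶜ).indicator (fun _ : Vec n => (2*R)^2) with hG
    have hGint : Integrable G (volume.restrict Ω) := (integrable_const _).indicator (hskm k).compl
    have hfG : ∀ᵐ x ∂(volume.restrict Ω), ‖(u i) x - ubar x‖^2 ≤ G x := by
      filter_upwards [hbd, hN i hi, hp₀] with x h1 h2 h3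
      by_cases hx : x ∈ p₀ ⁻¹' Ks k
      · have hpb : pbar x ∈ Ks k := by
          rw [h3]
          exact hx
        have heq := (h2 hpb).1
        rw [hG, Set.indicator_of_notMem (by simpa using hx), heq, sub_self, norm_zero]
        simp
      · rw [hG, Set.indicator_of_mem (by simpa using hx)]
        exact pow_le_pow_left₀ (norm_nonneg _) h1 2
    have hle : ∫ x in p₀ ⁻¹' Qs, ‖(u i) x - ubar x‖^2 ∂(volume.restrict Ω) ≤ ∫ x in p₀ ⁻¹' Qs, G x ∂(volume.restrict Ω) :=
      integral_mono_ae (hint.restrict) (hGint.restrict) (ae_restrict_of_ae hfG)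
    have hGeq : ∫ x in p₀ ⁻¹' Qs, G x ∂(volume.restrict Ω) = (((volume.restrict Ω).restrict (p₀ ⁻¹' Qs)) ((p₀ ⁻¹' Ks k)ᶜ)).toReal * (2*R)^2 := by
      rw [hG, integral_indicator_const _ (hskm k).compl, smul_eq_mul, measureReal_def]
    have hmeasval : ((volume.restrict Ω).restrict (p₀ ⁻¹' Qs)) ((p₀ ⁻¹' Ks k)ᶜ) = (volume.restrict Ω) ((p₀ ⁻¹' Qs) \ (p₀ ⁻¹' Ks k)) := by
      rw [Measure.restrict_apply (hskm k).compl, Set.inter_comm, ← Set.diff_eq]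
    have htoReal : ((volume.restrict Ω) ((p₀ ⁻¹' Qs) \ (p₀ ⁻¹' Ks k))).toReal < η/B := by
      have hne : (volume.restrict Ω) ((p₀ ⁻¹' Qs) \ (p₀ ⁻¹' Ks k)) ≠ ⊤ := measure_ne_top (volume.restrict Ω) _
      exact (ENNReal.lt_ofReal_iff_toReal_lt hne).mp hk
    have hnonneg : 0 ≤ ∫ x in p₀ ⁻¹' Qs, ‖(u i) x - ubar x‖^2 ∂(volume.restrict Ω) :=
      integral_nonneg fun x => by positivity
    have hfinal : ∫ x in p₀ ⁻¹' Qs, ‖(u i) x - ubar x‖^2 ∂(volume.restrict Ω) < η := by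
      have h2 : (((volume.restrict Ω) ((p₀ ⁻¹' Qs) \ (p₀ ⁻¹' Ks k))).toReal) * (2*R)^2 ≤ (η/B) * (2*R)^2 :=
        mul_le_mul_of_nonneg_right (le_of_lt htoReal) (by positivity)
      have h3 : (η/B) * (2*R)^2 < η := by
        rw [hB, div_mul_eq_mul_div, div_lt_iff₀ hBpos]
        nlinarith
      calc ∫ x in p₀ ⁻¹' Qs, ‖(u i) x - ubar x‖^2 ∂(volume.restrict Ω) ≤ ∫ x in p₀ ⁻¹' Qs, G x ∂(volume.restrict Ω) := hle
        _ = ((volume.restrict Ω) ((p₀ ⁻¹' Qs) \ (p₀ ⁻¹' Ks k))).toReal * (2*R)^2 := by rw [hGeq, hmeasval]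
        _ < η := lt_of_le_of_lt h2 h3
    rw [Real.dist_eq, sub_zero, abs_of_nonneg hnonneg]
    exact hfinal
  · -- part (iii)
    have hnm : NullMeasurableSet {x | pbar x ∈ Qs} (volume.restrict Ω) :=
      ((hQopen.measurableSet.preimage hp₀m.measurable).nullMeasurableSet).congr
        (hsetae Qs).symm
    have hae : ∀ᵐ x ∂(volume.restrict Ω), pbar x ∈ Qs → ubar x ∈ (M : Set (Vec m)) := by
      filter_upwards [hptwbar] with x hx3 hxQ
      obtain ⟨v, hv⟩ := hxQ
      have h2 : ubar x = v := by
        rw [hv] at hx3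
        exact hx3
      exact h2 ▸ hQM _ v hv
    filter_upwards [ae_restrict_of_ae hae, ae_restrict_mem₀ hnm] with x h1 h2
    exact h1 h2
end
end
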